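/- arXiv:1102.4478 — 6 statements merged into one kernel-verified Lean document; each statement's English description precedes it below -/
import Mathlib

section
/- Let γ : ℝ → ℝ² be a C^∞ curve with a 3/2-cusp at t = 0. Then the function τ(t) := sgn(t)·√(|s_g(t)|) extends to a C^∞ function on a neighborhood of 0 with τ(0) = 0 and τ'(0) > 0; in particular τ can be taken as a local coordinate of γ at t = 0 (the half-arclength parameter). -/
noncomputable section
open Real Set Filter Topology
open MeasureTheory intervalIntegral

/-- The determinant `[a, b] = a₁b₂ − a₂b₁` of two vectors in the plane. -/
def det2 (a b : ℝ × ℝ) : ℝ := a.1 * b.2 - a.2 * b.1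

/-- The Euclidean norm on `ℝ × ℝ`. -/
def enorm2 (a : ℝ × ℝ) : ℝ := Real.sqrt (a.1 ^ 2 + a.2 ^ 2)

/-- The Euclidean arclength parameter of `γ` based at `0`. -/
def sG (γ : ℝ → ℝ × ℝ) (t : ℝ) : ℝ := ∫ u in (0:ℝ)..t, enorm2 (deriv γ u)

/-- The affine arclength parameter of `γ` based at `0`. -/
def sA (γ : ℝ → ℝ × ℝ) (t : ℝ) : ℝ :=
  ∫ u in (0:ℝ)..t, |det2 (deriv γ u) (iteratedDeriv 2 γ u)| ^ ((1:ℝ)/3)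

/-- The Euclidean curvature `κ_g = [γ', γ'']/‖γ'‖³`. -/
def kappaG (γ : ℝ → ℝ × ℝ) (t : ℝ) : ℝ :=
  det2 (deriv γ t) (iteratedDeriv 2 γ t) / enorm2 (deriv γ t) ^ 3

/-- The affine curvature `κ_A`. -/
def kappaA (γ : ℝ → ℝ × ℝ) (t : ℝ) : ℝ :=
  (3 * det2 (deriv γ t) (iteratedDeriv 2 γ t) * det2 (deriv γ t) (iteratedDeriv 4 γ t)
    + 12 * det2 (deriv γ t) (iteratedDeriv 2 γ t)
        * det2 (iteratedDeriv 2 γ t) (iteratedDeriv 3 γ t)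
    - 5 * det2 (deriv γ t) (iteratedDeriv 3 γ t) ^ 2)
  / (9 * |det2 (deriv γ t) (iteratedDeriv 2 γ t)| ^ ((8:ℝ)/3))

/-- `γ` has a 3/2-cusp at `t = 0`. -/
def HasCusp (γ : ℝ → ℝ × ℝ) : Prop :=
  deriv γ 0 = 0 ∧ det2 (iteratedDeriv 2 γ 0) (iteratedDeriv 3 γ 0) ≠ 0

/-- The Euclidean cuspidal curvature at a 3/2-cusp `t = 0`. -/
def muG (γ : ℝ → ℝ × ℝ) : ℝ :=
  det2 (iteratedDeriv 2 γ 0) (iteratedDeriv 3 γ 0) / enorm2 (iteratedDeriv 2 γ 0) ^ ((5:ℝ)/2)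

/-- The affine cuspidal curvature at a 3/2-cusp `t = 0`. -/
def muA (γ : ℝ → ℝ × ℝ) : ℝ :=
  (24 * det2 (iteratedDeriv 2 γ 0) (iteratedDeriv 3 γ 0)
      * det2 (iteratedDeriv 2 γ 0) (iteratedDeriv 5 γ 0)
   + 60 * det2 (iteratedDeriv 2 γ 0) (iteratedDeriv 3 γ 0)
      * det2 (iteratedDeriv 3 γ 0) (iteratedDeriv 4 γ 0)
   - 35 * det2 (iteratedDeriv 2 γ 0) (iteratedDeriv 4 γ 0) ^ 2)
  / |det2 (iteratedDeriv 2 γ 0) (iteratedDeriv 3 γ 0)| ^ ((12:ℝ)/5)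

/-- `γ` (regular at `0`) has a generic inflection point at `t = 0`. -/
def HasGenericInflection (γ : ℝ → ℝ × ℝ) : Prop :=
  deriv γ 0 ≠ 0 ∧ det2 (deriv γ 0) (iteratedDeriv 2 γ 0) = 0 ∧
    det2 (deriv γ 0) (iteratedDeriv 3 γ 0) ≠ 0

/-- The affine inflectional curvature at a generic inflection point `t = 0`. -/
def muI (γ : ℝ → ℝ × ℝ) : ℝ :=
  Real.sign (det2 (deriv γ 0) (iteratedDeriv 3 γ 0)) *
    (det2 (deriv γ 0) (iteratedDeriv 4 γ 0)
      - 6 * det2 (iteratedDeriv 2 γ 0) (iteratedDeriv 3 γ 0))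
  / |det2 (deriv γ 0) (iteratedDeriv 3 γ 0)| ^ ((5:ℝ)/4)

/-- The affine map `x ↦ Ax + v` on the plane, with `A = (a b; c d)`. -/
def applyAff (a b c d : ℝ) (v : ℝ × ℝ) (p : ℝ × ℝ) : ℝ × ℝ :=
  (a * p.1 + b * p.2 + v.1, c * p.1 + d * p.2 + v.2)

lemma param_hasDerivAt (F : ℝ → ℝ → ℝ) (hF : ContDiff ℝ (⊤:ℕ∞) ↿F) (x₀ : ℝ) :
    HasDerivAt (fun x => ∫ s in (0:ℝ)..1, F x s)
      (∫ s in (0:ℝ)..1, fderiv ℝ ↿F (x₀, s) (1, 0)) x₀ := by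
  have hFc : Continuous ↿F := hF.continuous
  have hF'c : Continuous (fun p : ℝ × ℝ => fderiv ℝ ↿F p (1, 0)) :=
    ((hF.fderiv_right (m := (⊤:ℕ∞)) (by simp)).clm_apply contDiff_const).continuous
  have hK : IsCompact ((Icc (x₀-1) (x₀+1)) ×ˢ (Icc (0:ℝ) 1)) :=
    isCompact_Icc.prod isCompact_Icc
  obtain ⟨C, hC⟩ := hK.exists_bound_of_continuousOn hF'c.continuousOn
  have key := intervalIntegral.hasDerivAt_integral_of_dominated_loc_of_deriv_le
    (F := F) (F' := fun x s => fderiv ℝ ↿F (x, s) (1, 0)) (x₀ := x₀)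
    (a := (0:ℝ)) (b := 1) (bound := fun _ => C) (s := Metric.ball x₀ 1) (μ := volume) (Metric.ball_mem_nhds x₀ one_pos)
    (Eventually.of_forall fun x =>
      (hFc.comp (Continuous.prodMk_right x)).aestronglyMeasurable)
    ((hFc.comp (Continuous.prodMk_right x₀)).intervalIntegrable _ _)
    ((hF'c.comp (Continuous.prodMk_right x₀)).aestronglyMeasurable)
    (ae_of_all _ fun s hs x hx => by
      refine hC (x, s) ⟨?_, ?_⟩
      · have := abs_lt.mp (by simpa [Real.dist_eq] using mem_ball_iff_norm.mp hx)
        constructor <;> linarith [this.1, this.2]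
      · exact Ioc_subset_Icc_self (by simpa [uIoc_of_le (zero_le_one' ℝ)] using hs))
    (intervalIntegrable_const)
    (ae_of_all _ fun s hs x hx => by
      have hd := (hF.differentiable (by simp) (x, s)).hasFDerivAt
      exact hd.comp_hasDerivAt x ((hasDerivAt_id x).prodMk (hasDerivAt_const x s)))
  exact key.2

lemma param_contDiff_nat : ∀ (n : ℕ) (F : ℝ → ℝ → ℝ), ContDiff ℝ (⊤:ℕ∞) ↿F →
    ContDiff ℝ (n : ℕ∞) (fun x => ∫ s in (0:ℝ)..1, F x s) := by
  intro n
  induction n with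
  | zero =>
    intro F hF
    rw [Nat.cast_zero, show ((0:ℕ∞) : WithTop ℕ∞) = 0 by rfl, contDiff_zero]
    exact intervalIntegral.continuous_parametric_intervalIntegral_of_continuous'
      (f := F) hF.continuous 0 1
  | succ n ih =>
    intro F hF
    have hdiff : Differentiable ℝ (fun x => ∫ s in (0:ℝ)..1, F x s) :=
      fun x => (param_hasDerivAt F hF x).differentiableAt
    have hderiv : deriv (fun x => ∫ s in (0:ℝ)..1, F x s)
        = fun x₀ => ∫ s in (0:ℝ)..1, fderiv ℝ ↿F (x₀, s) (1, 0) :=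
      funext fun x => (param_hasDerivAt F hF x).deriv
    have hcast : (((n+1 : ℕ) : ℕ∞) : WithTop ℕ∞) = (((n:ℕ∞)) : WithTop ℕ∞) + 1 := by
      push_cast; ring
    rw [hcast, contDiff_succ_iff_deriv]
    refine ⟨hdiff, by simp, ?_⟩
    rw [hderiv]
    exact ih (fun x s => fderiv ℝ ↿F (x, s) (1, 0))
      ((hF.fderiv_right (m := (⊤:ℕ∞)) (by simp)).clm_apply contDiff_const)

lemma param_contDiff (F : ℝ → ℝ → ℝ) (hF : ContDiff ℝ (⊤:ℕ∞) ↿F) :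
    ContDiff ℝ (⊤:ℕ∞) (fun x => ∫ s in (0:ℝ)..1, F x s) := by
  exact contDiff_infty.mpr fun n => param_contDiff_nat n F hF

lemma hadamard (f : ℝ → ℝ) (hf : ContDiff ℝ (⊤:ℕ∞) f) (h0 : f 0 = 0) :
    ∃ g : ℝ → ℝ, ContDiff ℝ (⊤:ℕ∞) g ∧ (∀ t, f t = t * g t) ∧ g 0 = deriv f 0 := by
  have hf' : ContDiff ℝ (⊤:ℕ∞) (deriv f) := (contDiff_infty_iff_deriv.mp hf).2
  refine ⟨fun t => ∫ s in (0:ℝ)..1, deriv f (s * t), ?_, ?_, ?_⟩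
  · exact param_contDiff (fun t s => deriv f (s * t))
      (hf'.comp (contDiff_snd.mul contDiff_fst))
  · intro t
    have hint : IntervalIntegrable (fun s => deriv f (s * t) * t) volume 0 1 :=
      ((hf'.continuous.comp (continuous_id.mul continuous_const)).mul
        continuous_const).intervalIntegrable _ _
    have hder : ∀ s ∈ uIcc (0:ℝ) 1, HasDerivAt (fun s => f (s * t)) (deriv f (s * t) * t) s :=
      fun s _ => ((hf.differentiable (by simp) (s * t)).hasDerivAt).comp s
        (hasDerivAt_mul_const t)
    have := intervalIntegral.integral_eq_sub_of_hasDerivAt hder hint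
    rw [intervalIntegral.integral_mul_const] at this
    simp only [one_mul, zero_mul, h0, sub_zero] at this
    rw [mul_comm, this]
  · simp

/-- At a 3/2-cusp, `τ(t) = sgn(t)·√|s_g(t)|` extends to a `C^∞` function near `0`
with `τ(0) = 0` and `τ'(0) > 0`, so it is a local coordinate (half-arclength parameter). -/
theorem stmt_0 (γ : ℝ → ℝ × ℝ) (hγ : ContDiff ℝ (⊤:ℕ∞) γ) (hcusp : HasCusp γ) :
    ∃ ε > (0:ℝ), ∃ τ : ℝ → ℝ, ContDiffOn ℝ (⊤:ℕ∞) τ (Set.Ioo (-ε) ε) ∧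
      (∀ t ∈ Set.Ioo (-ε) ε, τ t = Real.sign t * Real.sqrt |sG γ t|) ∧
      τ 0 = 0 ∧ 0 < deriv τ 0 := by
  have hd1 : ContDiff ℝ (⊤:ℕ∞) (deriv γ) := (contDiff_infty_iff_deriv.mp hγ).2
  have hd1' : Differentiable ℝ (deriv γ) := (contDiff_infty_iff_deriv.mp hd1).1
  -- second derivative
  have hit2 : iteratedDeriv 2 γ = deriv (deriv γ) := by
    rw [iteratedDeriv_succ, iteratedDeriv_one]
  have h2ne : iteratedDeriv 2 γ 0 ≠ 0 := by
    intro h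
    exact hcusp.2 (by simp [det2, h])
  -- Hadamard on the components of deriv γ
  obtain ⟨g₁, hg₁, hfg₁, hg₁0⟩ := hadamard (fun t => (deriv γ t).1)
    (contDiff_fst.comp hd1) (by beta_reduce; rw [hcusp.1]; rfl)
  obtain ⟨g₂, hg₂, hfg₂, hg₂0⟩ := hadamard (fun t => (deriv γ t).2)
    (contDiff_snd.comp hd1) (by beta_reduce; rw [hcusp.1]; rfl)
  have hval₁ : g₁ 0 = (iteratedDeriv 2 γ 0).1 := by
    rw [hg₁0, hit2]
    exact (((ContinuousLinearMap.fst ℝ ℝ ℝ).hasFDerivAt).comp_hasDerivAt 0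
      (hd1' 0).hasDerivAt).deriv
  have hval₂ : g₂ 0 = (iteratedDeriv 2 γ 0).2 := by
    rw [hg₂0, hit2]
    exact (((ContinuousLinearMap.snd ℝ ℝ ℝ).hasFDerivAt).comp_hasDerivAt 0
      (hd1' 0).hasDerivAt).deriv
  obtain ⟨m, hm, hm_eq, hm0⟩ : ∃ m : ℝ → ℝ, ContDiff ℝ (⊤:ℕ∞) m ∧
      (∀ t, m t = g₁ t ^ 2 + g₂ t ^ 2) ∧ 0 < m 0 := by
    refine ⟨fun t => g₁ t ^ 2 + g₂ t ^ 2, (hg₁.pow 2).add (hg₂.pow 2), fun t => rfl, ?_⟩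
    have h1 : (iteratedDeriv 2 γ 0).1 ≠ 0 ∨ (iteratedDeriv 2 γ 0).2 ≠ 0 := by
      by_contra h
      push_neg at h
      exact h2ne (Prod.ext h.1 h.2)
    simp only [hval₁, hval₂]
    rcases h1 with h | h <;>
      nlinarith [sq_nonneg (iteratedDeriv 2 γ 0).1, sq_nonneg (iteratedDeriv 2 γ 0).2,
        sq_abs (iteratedDeriv 2 γ 0).1, sq_abs (iteratedDeriv 2 γ 0).2, abs_pos.mpr h]
  -- δ such that m ≥ m0/2 on the closed ball of radius δ
  obtain ⟨δ, hδpos, hδ⟩ : ∃ δ > 0, ∀ t, |t| ≤ δ → m 0 / 2 < m t := by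
    have := Metric.continuousAt_iff.mp (hm.continuous.continuousAt (x := (0:ℝ))) (m 0 / 2) (by linarith)
    obtain ⟨d, hd, hball⟩ := this
    refine ⟨d/2, by linarith, fun t ht => ?_⟩
    have := hball (x := t) (by simpa [Real.dist_eq] using lt_of_le_of_lt ht (by linarith))
    rw [Real.dist_eq] at this
    have := abs_lt.mp this
    linarith [this.1]
  -- bump modification of m : a smooth positive m' agreeing with m near 0
  obtain ⟨m', hm', hm'pos, hm'eq⟩ : ∃ m' : ℝ → ℝ, ContDiff ℝ (⊤:ℕ∞) m' ∧
      (∀ t, 0 < m' t) ∧ (∀ t, |t| ≤ δ/2 → m' t = m t) := by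
    have hχ : ∃ χ : ContDiffBump (0:ℝ), χ.rIn = δ/2 ∧ χ.rOut = δ :=
      ⟨⟨δ/2, δ, by linarith, by linarith⟩, rfl, rfl⟩
    obtain ⟨χ, hrIn, hrOut⟩ := hχ
    refine ⟨fun t => m 0 / 4 + (m t - m 0 / 4) * χ t,
      contDiff_const.add ((hm.sub contDiff_const).mul χ.contDiff), ?_, ?_⟩
    · intro t
      rcases le_or_gt |t| δ with h | h
      · have h1 := hδ t h
        have h2 := χ.nonneg (x := t)
        nlinarith
      · have : χ t = 0 := by
          have : t ∉ Function.support χ := by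
            rw [χ.support_eq, hrOut]
            simp only [Metric.mem_ball, Real.dist_eq, sub_zero, not_lt]
            exact le_of_lt h
          simpa using this
        simp only [this, mul_zero, add_zero]
        linarith
    · intro t ht
      have : χ t = 1 := χ.one_of_mem_closedBall (by
        rw [hrIn]; simpa [Metric.mem_closedBall, Real.dist_eq] using ht)
      simp only [this, mul_one]
      ring
  -- r := sqrt of m'
  obtain ⟨r, hr, hrpos, hr_eq⟩ : ∃ r : ℝ → ℝ, ContDiff ℝ (⊤:ℕ∞) r ∧
      (∀ t, 0 < r t) ∧ (∀ t, r t = Real.sqrt (m' t)) :=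
    ⟨fun t => Real.sqrt (m' t),
      contDiff_iff_contDiffAt.mpr fun t => (hm'.contDiffAt).sqrt (ne_of_gt (hm'pos t)),
      fun t => Real.sqrt_pos.mpr (hm'pos t), fun t => rfl⟩
  have hrc : Continuous (fun u => u * r u) := continuous_id.mul hr.continuous
  -- the primitive G
  obtain ⟨G, hGd, hG0⟩ : ∃ G : ℝ → ℝ, (∀ t, HasDerivAt G (t * r t) t) ∧ G 0 = 0 :=
    ⟨fun t => ∫ u in (0:ℝ)..t, u * r u,
      fun t => intervalIntegral.integral_hasDerivAt_right (hrc.intervalIntegrable 0 t)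
        (hrc.stronglyMeasurableAtFilter _ _) hrc.continuousAt,
      intervalIntegral.integral_same⟩
  have hG : ContDiff ℝ (⊤:ℕ∞) G := by
    refine contDiff_infty_iff_deriv.mpr ⟨fun t => (hGd t).differentiableAt, ?_⟩
    rw [show deriv G = fun t => t * r t from funext fun t => (hGd t).deriv]
    exact contDiff_id.mul hr
  -- Hadamard twice on G
  obtain ⟨g, hg, hGg, hg0⟩ := hadamard G hG hG0
  have hg0' : g 0 = 0 := by rw [hg0, (hGd 0).deriv, zero_mul]
  obtain ⟨q, hq, hgq, hq0⟩ := hadamard g hg hg0'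
  have hGq : ∀ t, G t = t^2 * q t := by
    intro t; rw [hGg t, hgq t]; ring
  have hGint : ∀ t, ∫ u in (0:ℝ)..t, u * r u = G t := by
    intro t
    rw [intervalIntegral.integral_eq_sub_of_hasDerivAt (fun u _ => hGd u)
      (hrc.intervalIntegrable _ _), hG0, sub_zero]
  -- positivity of q at 0
  have hq0pos : 0 < q 0 := by
    obtain ⟨δ', hδ'pos, hδ'⟩ : ∃ δ' > 0, ∀ u, |u| ≤ δ' → r 0 / 2 ≤ r u := by
      have := Metric.continuousAt_iff.mp (hr.continuous.continuousAt (x := (0:ℝ)))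
        (r 0 / 2) (by linarith [hrpos 0])
      obtain ⟨d, hd, hball⟩ := this
      refine ⟨d/2, by linarith, fun u hu => ?_⟩
      have := hball (x := u) (by simpa [Real.dist_eq] using lt_of_le_of_lt hu (by linarith))
      rw [Real.dist_eq] at this
      have := abs_lt.mp this
      linarith [this.1]
    have key : ∀ t, 0 < t → t ≤ δ' → r 0 / 4 ≤ q t := by
      intro t ht ht'
      have hint1 : ∫ u in (0:ℝ)..t, u * (r 0 / 2) = t^2 * (r 0 / 4) := by
        rw [intervalIntegral.integral_mul_const, integral_id]; ring
      have hmono : (∫ u in (0:ℝ)..t, u * (r 0 / 2)) ≤ ∫ u in (0:ℝ)..t, u * r u := by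
        refine intervalIntegral.integral_mono_on (le_of_lt ht)
          ((continuous_id.mul continuous_const).intervalIntegrable _ _)
          (hrc.intervalIntegrable _ _) (fun u hu => ?_)
        refine mul_le_mul_of_nonneg_left (hδ' u ?_) hu.1
        rw [abs_of_nonneg hu.1]; linarith [hu.2]
      rw [hint1, hGint t, hGq t] at hmono
      nlinarith [sq_nonneg t, mul_pos ht ht]
    have hlim : Tendsto q (𝓝[>] (0:ℝ)) (𝓝 (q 0)) :=
      (hq.continuous.continuousAt.tendsto).mono_left nhdsWithin_le_nhds
    have hev : ∀ᶠ t in 𝓝[>] (0:ℝ), r 0 / 4 ≤ q t := by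
      filter_upwards [Ioc_mem_nhdsGT_of_mem (Set.mem_Ico.mpr ⟨le_refl 0, hδ'pos⟩)] with t ht
      exact key t ht.1 ht.2
    have := ge_of_tendsto hlim hev
    linarith [hrpos 0]
  -- choose ε
  obtain ⟨ε, hεpos, hεle, hε⟩ : ∃ ε > 0, ε ≤ δ/2 ∧ ∀ t, |t| < ε → 0 < q t := by
    have := Metric.continuousAt_iff.mp (hq.continuous.continuousAt (x := (0:ℝ))) (q 0) hq0pos
    obtain ⟨d, hd, hball⟩ := this
    refine ⟨min (δ/2) (d/2), by positivity, min_le_left _ _, fun t ht => ?_⟩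
    have h2 : dist t 0 < d := by
      rw [Real.dist_eq, sub_zero]
      exact lt_of_lt_of_le ht (le_trans (min_le_right _ _) (by linarith))
    have := hball h2
    rw [Real.dist_eq] at this
    have := abs_lt.mp this
    linarith [this.1]
  -- norm of the velocity
  have henorm : ∀ u, |u| ≤ δ/2 → enorm2 (deriv γ u) = |u| * r u := by
    intro u hu
    have h1 : (deriv γ u).1 ^ 2 + (deriv γ u).2 ^ 2 = u^2 * m u := by
      rw [hfg₁ u, hfg₂ u, hm_eq u]; ring
    rw [enorm2, h1, ← hm'eq u hu, Real.sqrt_mul (sq_nonneg u), Real.sqrt_sq_eq_abs, hr_eq u]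
  -- sG in terms of G
  have hsGval : ∀ t, |t| < ε → |sG γ t| = t^2 * q t := by
    intro t ht
    have habs : ∀ u ∈ uIcc (0:ℝ) t, |u| ≤ δ/2 := by
      intro u hu
      rcases mem_uIcc.mp hu with h | h
      · rw [abs_of_nonneg h.1]
        calc u ≤ t := h.2
          _ ≤ |t| := le_abs_self t
          _ ≤ δ/2 := le_trans (le_of_lt ht) hεle
      · rw [abs_of_nonpos h.2]
        calc -u ≤ -t := by linarith [h.1]
          _ ≤ |t| := neg_le_abs t
          _ ≤ δ/2 := le_trans (le_of_lt ht) hεle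
    have hqt : 0 < q t := hε t ht
    rcases le_or_gt 0 t with h | h
    · have : sG γ t = G t := by
        rw [sG, ← hGint t]
        refine intervalIntegral.integral_congr (fun u hu => ?_)
        rw [henorm u (habs u hu)]
        rcases mem_uIcc.mp hu with h' | h'
        · rw [abs_of_nonneg h'.1]
        · have : u = 0 := le_antisymm h'.2 (le_trans h h'.1)
          simp [this]
      rw [this, hGq t, abs_of_nonneg (by nlinarith [sq_nonneg t])]
    · have : sG γ t = -G t := by
        rw [sG, ← hGint t, ← intervalIntegral.integral_neg]
        refine intervalIntegral.integral_congr (fun u hu => ?_)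
        rw [henorm u (habs u hu)]
        have h' : u ≤ 0 := by
          rcases mem_uIcc.mp hu with h' | h'
          · linarith [h'.2, h]
          · exact h'.2
        rw [abs_of_nonpos h']; ring
      rw [this, hGq t, abs_of_nonpos (by nlinarith [sq_nonneg t])]
      ring
  -- the half-arclength coordinate
  refine ⟨ε, hεpos, fun t => t * Real.sqrt (q t), ?_, ?_, ?_, ?_⟩
  · intro t ht
    have htε : |t| < ε := abs_lt.mpr ⟨by linarith [ht.1], ht.2⟩
    exact ((contDiffAt_id.mul ((hq.contDiffAt).sqrt (ne_of_gt (hε t htε)))).contDiffWithinAt)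
  · intro t ht
    have htε : |t| < ε := abs_lt.mpr ⟨by linarith [ht.1], ht.2⟩
    have hsgn : Real.sign t * |t| = t := by
      rcases lt_trichotomy t 0 with h | h | h
      · rw [Real.sign_of_neg h, abs_of_neg h]; ring
      · simp [h]
      · rw [Real.sign_of_pos h, abs_of_pos h]; ring
    rw [hsGval t htε]
    rw [Real.sqrt_mul (sq_nonneg t), Real.sqrt_sq_eq_abs, ← mul_assoc, hsgn]
  · exact zero_mul _
  · have hs : HasDerivAt (fun x => Real.sqrt (q x))
        (deriv (fun x => Real.sqrt (q x)) 0) 0 := by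
      refine (DifferentiableAt.hasDerivAt ?_)
      exact (((hq.contDiffAt (x := (0:ℝ))).sqrt (ne_of_gt hq0pos)).differentiableAt (by simp))
    have hprod := (hasDerivAt_id (0:ℝ)).mul hs
    simp only [id_eq, one_mul, zero_mul, add_zero] at hprod
    rw [show (fun t => t * Real.sqrt (q t)) = (id * fun x => Real.sqrt (q x)) from rfl, hprod.deriv]
    positivity
end
end

section
/- Let γ : ℝ → ℝ² be a C^∞ curve with a 3/2-cusp at t = 0. Then there exists a C^∞ function F on a neighborhood of 0 such that F(t) = √(|s_g(t)|)·κ_g(t) for all t ≠ 0 near 0; that is, the normalized curvature function √(|s_g|)·κ_g extends to a C^∞ function of t at t = 0. -/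
noncomputable section
open Real Set Filter Topology

open MeasureTheory intervalIntegral

private lemma one_le_inf : (1 : WithTop ℕ∞) ≤ ((⊤:ℕ∞) : WithTop ℕ∞) := by
  exact_mod_cast le_top

private lemma J_hasDerivAt (m : ℕ) (f : ℝ → ℝ) (hf : ContDiff ℝ (⊤:ℕ∞) f) (x₀ : ℝ) :
    HasDerivAt (fun x => ∫ s in (0:ℝ)..1, s ^ m * f (s * x))
      (∫ s in (0:ℝ)..1, s ^ (m + 1) * deriv f (s * x₀)) x₀ := by
  have hf' : ContDiff ℝ (⊤:ℕ∞) (deriv f) := (contDiff_infty_iff_deriv.mp hf).2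
  obtain ⟨C, hC⟩ :=
    (isCompact_Icc : IsCompact (Icc (-(|x₀| + 1)) (|x₀| + 1))).exists_bound_of_continuousOn
      hf'.continuous.continuousOn
  have cont1 : ∀ x : ℝ, Continuous fun s : ℝ => s ^ m * f (s * x) := fun x =>
    (continuous_pow m).mul (hf.continuous.comp (continuous_id.mul continuous_const))
  have cont2 : Continuous fun s : ℝ => s ^ (m + 1) * deriv f (s * x₀) :=
    (continuous_pow (m + 1)).mul (hf'.continuous.comp (continuous_id.mul continuous_const))
  have key := intervalIntegral.hasDerivAt_integral_of_dominated_loc_of_deriv_le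
    (μ := volume) (a := (0:ℝ)) (b := 1) (s := Metric.ball x₀ 1)
    (F := fun x s => s ^ m * f (s * x)) (F' := fun x s => s ^ (m + 1) * deriv f (s * x))
    (bound := fun _ => |C|) (x₀ := x₀)
    (Metric.ball_mem_nhds x₀ one_pos)
    (Eventually.of_forall fun x => (cont1 x).aestronglyMeasurable)
    ((cont1 x₀).intervalIntegrable _ _)
    cont2.aestronglyMeasurable
    ?_ intervalIntegrable_const ?_
  · exact key.2
  · refine ae_of_all _ fun s hs x hx => ?_
    rw [Set.uIoc_of_le (by norm_num : (0:ℝ) ≤ 1)] at hs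
    have hs0 : 0 < s := hs.1
    have hs1 : s ≤ 1 := hs.2
    have hx1 : |x - x₀| < 1 := by
      have := Metric.mem_ball.mp hx; rwa [Real.dist_eq] at this
    have hxb : |x| ≤ |x₀| + 1 := by
      have h1 : |x| - |x₀| ≤ |x - x₀| := abs_sub_abs_le_abs_sub x x₀
      linarith
    have hsx : s * x ∈ Icc (-(|x₀| + 1)) (|x₀| + 1) := by
      have : |s * x| ≤ |x₀| + 1 := by
        rw [abs_mul, abs_of_pos hs0]
        nlinarith [abs_nonneg x]
      exact abs_le.mp this
    have hCb := hC (s * x) hsx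
    have h1 : ‖s ^ (m + 1) * deriv f (s * x)‖ = |s| ^ (m + 1) * |deriv f (s * x)| := by
      rw [Real.norm_eq_abs, abs_mul, abs_pow]
    rw [h1]
    have h2 : |s| ^ (m + 1) ≤ 1 :=
      pow_le_one₀ (abs_nonneg s) (by rw [abs_of_pos hs0]; exact hs1)
    have h3 : |deriv f (s * x)| ≤ |C| := le_trans hCb (le_abs_self C)
    nlinarith [abs_nonneg (deriv f (s * x)), pow_nonneg (abs_nonneg s) (m + 1)]
  · refine ae_of_all _ fun s _ x _ => ?_
    have h1 : HasDerivAt (fun y : ℝ => f (s * y)) (deriv f (s * x) * (s * 1)) x :=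
      (hf.differentiable (by simp) (s * x)).hasDerivAt.comp x ((hasDerivAt_id x).const_mul s)
    have h2 := h1.const_mul (s ^ m)
    have h3 : s ^ m * (deriv f (s * x) * (s * 1)) = s ^ (m + 1) * deriv f (s * x) := by ring
    rw [h3] at h2
    exact h2

private lemma J_contDiff (n : ℕ) : ∀ (m : ℕ) (f : ℝ → ℝ), ContDiff ℝ (⊤:ℕ∞) f →
    ContDiff ℝ (n : ℕ∞) (fun x => ∫ s in (0:ℝ)..1, s ^ m * f (s * x)) := by
  induction n with
  | zero =>
    intro m f hf
    have hc : Continuous fun x => ∫ s in (0:ℝ)..1, s ^ m * f (s * x) :=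
      Differentiable.continuous fun x => (J_hasDerivAt m f hf x).differentiableAt
    exact_mod_cast contDiff_zero.mpr hc
  | succ n ih =>
    intro m f hf
    have hdiff : Differentiable ℝ fun x => ∫ s in (0:ℝ)..1, s ^ m * f (s * x) :=
      fun x => (J_hasDerivAt m f hf x).differentiableAt
    have hderiv : deriv (fun x => ∫ s in (0:ℝ)..1, s ^ m * f (s * x)) =
        fun x => ∫ s in (0:ℝ)..1, s ^ (m + 1) * deriv f (s * x) :=
      funext fun x => (J_hasDerivAt m f hf x).deriv
    have h1 : ContDiff ℝ ((n : WithTop ℕ∞) + 1) fun x => ∫ s in (0:ℝ)..1, s ^ m * f (s * x) := by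
      rw [contDiff_succ_iff_deriv]
      refine ⟨hdiff, by simp, ?_⟩
      rw [hderiv]
      exact_mod_cast ih (m + 1) (deriv f) (contDiff_infty_iff_deriv.mp hf).2
    exact_mod_cast h1

private lemma hadamard_div (f : ℝ → ℝ) (hf : ContDiff ℝ (⊤:ℕ∞) f) (h0 : f 0 = 0) :
    ∃ g : ℝ → ℝ, ContDiff ℝ (⊤:ℕ∞) g ∧ ∀ t, f t = t * g t := by
  have hf' : ContDiff ℝ (⊤:ℕ∞) (deriv f) := (contDiff_infty_iff_deriv.mp hf).2
  refine ⟨fun t => ∫ s in (0:ℝ)..1, s ^ 0 * deriv f (s * t), ?_, ?_⟩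
  · rw [show ((⊤:ℕ∞) : WithTop ℕ∞) = (⊤:ℕ∞) from rfl]
    exact contDiff_infty.mpr fun n => by exact_mod_cast J_contDiff n 0 (deriv f) hf'
  · intro t
    simp only [pow_zero, one_mul]
    have e2 := intervalIntegral.smul_integral_comp_mul_right (a := (0:ℝ)) (b := 1)
      (fun u => deriv f u) t
    simp only [smul_eq_mul, zero_mul, one_mul] at e2
    have e3 : ∫ u in (0:ℝ)..t, deriv f u = f t - f 0 :=
      intervalIntegral.integral_deriv_eq_sub (fun x _ => hf.differentiable (by simp) x)
        (hf'.continuous.intervalIntegrable _ _)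
    rw [e2, e3, h0, sub_zero]

private lemma hadamard_div2 (f : ℝ → ℝ × ℝ) (hf : ContDiff ℝ (⊤:ℕ∞) f) (h0 : f 0 = 0) :
    ∃ A : ℝ → ℝ × ℝ, ContDiff ℝ (⊤:ℕ∞) A ∧ ∀ t, f t = t • A t := by
  obtain ⟨g1, hg1, he1⟩ := hadamard_div (fun t => (f t).1) hf.fst (by simp [h0])
  obtain ⟨g2, hg2, he2⟩ := hadamard_div (fun t => (f t).2) hf.snd (by simp [h0])
  refine ⟨fun t => (g1 t, g2 t), ContDiff.prodMk hg1 hg2, fun t => ?_⟩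
  have h1 : (f t).1 = (t • ((g1 t, g2 t) : ℝ × ℝ)).1 := by
    simpa [smul_eq_mul] using he1 t
  have h2 : (f t).2 = (t • ((g1 t, g2 t) : ℝ × ℝ)).2 := by
    simpa [smul_eq_mul] using he2 t
  exact Prod.ext h1 h2

private lemma primitive_contDiff (g : ℝ → ℝ) (hg : ContDiff ℝ (⊤:ℕ∞) g) :
    ContDiff ℝ (⊤:ℕ∞) (fun t => ∫ u in (0:ℝ)..t, g u) ∧
      ∀ t, HasDerivAt (fun t => ∫ u in (0:ℝ)..t, g u) (g t) t := by
  have hd : ∀ t, HasDerivAt (fun t => ∫ u in (0:ℝ)..t, g u) (g t) t := fun t =>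
    intervalIntegral.integral_hasDerivAt_right (hg.continuous.intervalIntegrable _ _)
      (hg.continuous.stronglyMeasurableAtFilter _ _) hg.continuous.continuousAt
  refine ⟨?_, hd⟩
  rw [contDiff_infty_iff_deriv]
  refine ⟨fun t => (hd t).differentiableAt, ?_⟩
  have h1 : deriv (fun t => ∫ u in (0:ℝ)..t, g u) = g := funext fun t => (hd t).deriv
  rw [h1]
  exact hg

/-- At a 3/2-cusp, the normalized curvature `√|s_g|·κ_g` extends to a `C^∞` function
of `t` at `t = 0`. -/
theorem stmt_1 (γ : ℝ → ℝ × ℝ) (hγ : ContDiff ℝ (⊤:ℕ∞) γ) (hcusp : HasCusp γ) :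
    ∃ ε > (0:ℝ), ∃ F : ℝ → ℝ, ContDiffOn ℝ (⊤:ℕ∞) F (Set.Ioo (-ε) ε) ∧
      ∀ t ∈ Set.Ioo (-ε) ε, t ≠ 0 → F t = Real.sqrt |sG γ t| * kappaG γ t := by
  obtain ⟨hγ'0, hdet0⟩ := hcusp
  have hγ1 : ContDiff ℝ (⊤:ℕ∞) (deriv γ) := (contDiff_infty_iff_deriv.mp hγ).2
  obtain ⟨A, hA, hAe⟩ := hadamard_div2 (deriv γ) hγ1 hγ'0
  have hA' : ContDiff ℝ (⊤:ℕ∞) (deriv A) := (contDiff_infty_iff_deriv.mp hA).2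
  -- the second derivative of γ in terms of A
  have h2d : ∀ t : ℝ, HasDerivAt (deriv γ) (A t + t • deriv A t) t := by
    intro t
    have h := (hasDerivAt_id t).smul ((hA.differentiable (by simp) t).hasDerivAt)
    simp only [id_eq] at h
    change HasDerivAt (fun y : ℝ => y • A y) _ _ at h
    have hfun : (fun y : ℝ => y • A y) = deriv γ := funext fun y => (hAe y).symm
    rw [hfun] at h
    convert h using 1
    simp [add_comm]
  have hIter2 : ∀ t, iteratedDeriv 2 γ t = A t + t • deriv A t := by
    intro t
    rw [show (2:ℕ) = 1 + 1 from rfl, iteratedDeriv_succ, iteratedDeriv_one]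
    exact (h2d t).deriv
  have hA0 : A 0 = iteratedDeriv 2 γ 0 := by rw [hIter2 0]; simp
  have hA0ne : A 0 ≠ 0 := by
    rw [hA0]; intro h; apply hdet0; rw [h]; simp [det2]
  set p : ℝ → ℝ := fun t => (A t).1 ^ 2 + (A t).2 ^ 2 with hp_def
  clear_value p
  have hp : ContDiff ℝ (⊤:ℕ∞) p := by rw [hp_def]; exact (hA.fst.pow 2).add (hA.snd.pow 2)
  have hp0 : 0 < p 0 := by
    have h1 : (A 0).1 ≠ 0 ∨ (A 0).2 ≠ 0 := by
      by_contra hc; push_neg at hc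
      exact hA0ne (Prod.ext hc.1 hc.2)
    have h2 : 0 < (A 0).1 ^ 2 + (A 0).2 ^ 2 := by
      rcases h1 with h | h
      · have h3 : 0 < |(A 0).1| := abs_pos.mpr h
        nlinarith [sq_abs (A 0).1, sq_nonneg (A 0).2]
      · have h3 : 0 < |(A 0).2| := abs_pos.mpr h
        nlinarith [sq_abs (A 0).2, sq_nonneg (A 0).1]
    simpa [hp_def] using h2
  obtain ⟨ε₀, hε₀, hpball⟩ : ∃ ε₀ > (0:ℝ), ∀ u : ℝ, |u| < ε₀ → p 0 / 2 < p u := by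
    have h1 : ∀ᶠ u in 𝓝 (0:ℝ), p 0 / 2 < p u :=
      (hp.continuous.continuousAt).eventually (eventually_gt_nhds (by linarith))
    obtain ⟨ε₀, hε₀, h⟩ := Metric.eventually_nhds_iff.mp h1
    exact ⟨ε₀, hε₀, fun u hu => h (by simpa [Real.dist_eq] using hu)⟩
  set φ : ContDiffBump (0:ℝ) := ⟨ε₀/2, ε₀, by linarith, by linarith⟩ with hφ_def
  set q : ℝ → ℝ := fun t => φ t * p t + (1 - φ t) with hq_def
  clear_value q
  have hq : ContDiff ℝ (⊤:ℕ∞) q := by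
    rw [hq_def]; exact (φ.contDiff.mul hp).add (contDiff_const.sub φ.contDiff)
  have hqpos : ∀ t, 0 < q t := by
    intro t
    by_cases ht : |t| < ε₀
    · have h1 := hpball t ht
      have h2 := φ.nonneg (x := t)
      have h3 := φ.le_one (x := t)
      have h4 : 0 < p 0 / 2 := by linarith
      simp only [hq_def]
      rcases le_or_gt (p 0 / 2) 1 with hc | hc
      · nlinarith [mul_nonneg h2 (sub_pos.mpr h1).le,
          mul_nonneg (sub_nonneg.mpr h3) (sub_nonneg.mpr hc)]
      · nlinarith [mul_nonneg h2 (by linarith : (0:ℝ) ≤ p t - 1)]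
    · have h0 : φ t = 0 := φ.zero_of_le_dist (by
        rw [Real.dist_eq, sub_zero]; push_neg at ht; simpa [hφ_def] using ht)
      simp [hq_def, h0]
  have hsq : ContDiff ℝ (⊤:ℕ∞) (fun u => Real.sqrt (q u)) := by
    rw [contDiff_iff_contDiffAt]
    exact fun x => (Real.contDiffAt_sqrt (ne_of_gt (hqpos x))).comp x hq.contDiffAt
  set r : ℝ → ℝ := fun u => u * Real.sqrt (q u) with hr_def
  clear_value r
  have hr : ContDiff ℝ (⊤:ℕ∞) r := by rw [hr_def]; exact contDiff_id.mul hsq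
  obtain ⟨hS, hSd⟩ := primitive_contDiff r hr
  set S : ℝ → ℝ := fun t => ∫ u in (0:ℝ)..t, r u with hS_def
  clear_value S
  obtain ⟨Q, hQ, hSQ⟩ := hadamard_div S hS (by simp [hS_def])
  have hQ0 : Q 0 = 0 := by
    have h1 := (hasDerivAt_id (0:ℝ)).mul ((hQ.differentiable (by simp) 0).hasDerivAt)
    simp only [id_eq] at h1
    change HasDerivAt (fun t : ℝ => t * Q t) _ _ at h1
    have h2 : (fun t : ℝ => t * Q t) = S := funext fun t => (hSQ t).symm
    rw [h2] at h1
    have h3 := h1.unique (hSd 0)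
    simp only [hr_def, id_eq, zero_mul, mul_zero, add_zero, one_mul, Real.sqrt_eq_zero'] at h3
    simpa using h3
  obtain ⟨H, hH, hQH⟩ := hadamard_div Q hQ hQ0
  have hSH : ∀ t, S t = t ^ 2 * H t := fun t => by rw [hSQ t, hQH t]; ring
  have key_eq : ∀ t : ℝ, t ≠ 0 → Real.sqrt (q t) = 2 * H t + t * deriv H t := by
    intro t ht
    have e1 : deriv S t = r t := (hSd t).deriv
    have e2 : S = fun u => u ^ 2 * H u := funext hSH
    have h := (hasDerivAt_pow 2 t).mul ((hH.differentiable (by simp) t).hasDerivAt)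
    have e3 : deriv S t = 2 * t ^ 1 * H t + t ^ 2 * deriv H t := by
      rw [e2, show (fun u : ℝ => u ^ 2 * H u) = (fun x : ℝ => x ^ 2) * H from rfl, h.deriv]
      norm_num
    have e4 : t * Real.sqrt (q t) = 2 * t ^ 1 * H t + t ^ 2 * deriv H t := by
      rw [← e3, e1, hr_def]
    have e5 : t * Real.sqrt (q t) = t * (2 * H t + t * deriv H t) := by rw [e4]; ring
    exact mul_left_cancel₀ ht e5
  have hm0 : Real.sqrt (q 0) = 2 * H 0 := by
    have l1 : Tendsto (fun t => Real.sqrt (q t)) (𝓝[≠] (0:ℝ)) (𝓝 (Real.sqrt (q 0))) :=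
      (hsq.continuous.continuousAt).tendsto.mono_left nhdsWithin_le_nhds
    have hcH : Continuous fun t => 2 * H t + t * deriv H t :=
      (continuous_const.mul hH.continuous).add
        (continuous_id.mul ((contDiff_infty_iff_deriv.mp hH).2.continuous))
    have l2 : Tendsto (fun t => 2 * H t + t * deriv H t) (𝓝[≠] (0:ℝ))
        (𝓝 (2 * H 0 + 0 * deriv H 0)) :=
      (hcH.continuousAt).tendsto.mono_left nhdsWithin_le_nhds
    have l3 : Tendsto (fun t => Real.sqrt (q t)) (𝓝[≠] (0:ℝ))
        (𝓝 (2 * H 0 + 0 * deriv H 0)) := by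
      refine l2.congr' ?_
      filter_upwards [self_mem_nhdsWithin] with t ht
      exact (key_eq t ht).symm
    have := tendsto_nhds_unique l1 l3
    simpa using this
  have hH0 : 0 < H 0 := by
    have h1 : 0 < Real.sqrt (q 0) := Real.sqrt_pos.mpr (hqpos 0)
    linarith
  obtain ⟨ε₁, hε₁, hHball⟩ : ∃ ε₁ > (0:ℝ), ∀ u : ℝ, |u| < ε₁ → 0 < H u := by
    have h1 : ∀ᶠ u in 𝓝 (0:ℝ), 0 < H u :=
      (hH.continuous.continuousAt).eventually (eventually_gt_nhds hH0)
    obtain ⟨ε₁, hε₁, h⟩ := Metric.eventually_nhds_iff.mp h1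
    exact ⟨ε₁, hε₁, fun u hu => h (by simpa [Real.dist_eq] using hu)⟩
  set D : ℝ → ℝ := fun t => (A t).1 * (deriv A t).2 - (A t).2 * (deriv A t).1 with hD_def
  clear_value D
  have hD : ContDiff ℝ (⊤:ℕ∞) D := by rw [hD_def]; exact (hA.fst.mul hA'.snd).sub (hA.snd.mul hA'.fst)
  set ε : ℝ := min (ε₀/2) ε₁ with hε_def
  clear_value ε
  have hεpos : 0 < ε := by rw [hε_def]; exact lt_min (by linarith) hε₁
  have hεle₀ : ε ≤ ε₀/2 := by rw [hε_def]; exact min_le_left _ _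
  have hεle₁ : ε ≤ ε₁ := by rw [hε_def]; exact min_le_right _ _
  refine ⟨ε, hεpos, fun t => Real.sqrt (H t) * D t / Real.sqrt (p t) ^ 3, ?_, ?_⟩
  · intro t ht
    have ht0 : |t| < ε := abs_lt.mpr ⟨by simpa using ht.1, ht.2⟩
    have htε₀ : |t| < ε₀ := lt_of_lt_of_le ht0 (le_trans hεle₀ (by linarith))
    have hpt : 0 < p t := lt_trans (by linarith) (hpball t htε₀)
    have hHt : 0 < H t := hHball t (lt_of_lt_of_le ht0 hεle₁)
    apply ContDiffAt.contDiffWithinAt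
    refine ContDiffAt.div ?_ ?_ ?_
    · exact ((Real.contDiffAt_sqrt (ne_of_gt hHt)).comp t hH.contDiffAt).mul hD.contDiffAt
    · exact ((Real.contDiffAt_sqrt (ne_of_gt hpt)).comp t hp.contDiffAt).pow 3
    · exact pow_ne_zero 3 (Real.sqrt_ne_zero'.mpr hpt)
  · intro t ht htne
    have ht0 : |t| < ε := abs_lt.mpr ⟨by simpa using ht.1, ht.2⟩
    have htm : |t| ≤ ε₀/2 := le_of_lt (lt_of_lt_of_le ht0 hεle₀)
    have htε₀ : |t| < ε₀ := lt_of_le_of_lt htm (by linarith)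
    have hpt : 0 < p t := lt_trans (by linarith) (hpball t htε₀)
    have hHt : 0 < H t := hHball t (lt_of_lt_of_le ht0 hεle₁)
    have henorm : ∀ u : ℝ, enorm2 (deriv γ u) = |u| * Real.sqrt (p u) := by
      intro u
      rw [hAe u, enorm2]
      have h1 : (u • A u).1 = u * (A u).1 := rfl
      have h2 : (u • A u).2 = u * (A u).2 := rfl
      rw [h1, h2]
      have h3 : (u * (A u).1) ^ 2 + (u * (A u).2) ^ 2 = u ^ 2 * p u := by
        rw [hp_def]; ring
      rw [h3, Real.sqrt_mul (sq_nonneg u), Real.sqrt_sq_eq_abs]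
    have hiq : ∀ u : ℝ, |u| ≤ ε₀/2 → q u = p u := by
      intro u hu
      have hφ1 : φ u = 1 := φ.one_of_mem_closedBall (by
        rw [Metric.mem_closedBall, Real.dist_eq, sub_zero]; simpa [hφ_def] using hu)
      simp [hq_def, hφ1]
    have hsGt : sG γ t = ∫ u in (0:ℝ)..t, |u| * Real.sqrt (p u) := by
      simp only [sG, henorm]
    have habs : |sG γ t| = S t := by
      rcases le_or_gt 0 t with htp | htn
      · have e1 : ∫ u in (0:ℝ)..t, |u| * Real.sqrt (p u) = ∫ u in (0:ℝ)..t, r u := by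
          apply intervalIntegral.integral_congr
          intro u hu
          rw [Set.uIcc_of_le htp] at hu
          have hu1 : 0 ≤ u := hu.1
          have hu2 : u ≤ t := hu.2
          have hu3 : |u| ≤ ε₀/2 := by
            rw [abs_of_nonneg hu1]
            have := le_abs_self t
            linarith
          simp only [hr_def]
          rw [abs_of_nonneg hu1, hiq u hu3]
        have e2 : 0 ≤ ∫ u in (0:ℝ)..t, |u| * Real.sqrt (p u) :=
          intervalIntegral.integral_nonneg htp
            (fun u _ => mul_nonneg (abs_nonneg u) (Real.sqrt_nonneg _))
        rw [hsGt, abs_of_nonneg e2, e1, hS_def]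
      · have symm1 : ∫ u in (0:ℝ)..t, |u| * Real.sqrt (p u)
            = -∫ u in t..(0:ℝ), |u| * Real.sqrt (p u) :=
          intervalIntegral.integral_symm t 0
        have e2 : 0 ≤ ∫ u in t..(0:ℝ), |u| * Real.sqrt (p u) :=
          intervalIntegral.integral_nonneg (le_of_lt htn)
            (fun u _ => mul_nonneg (abs_nonneg u) (Real.sqrt_nonneg _))
        have e1 : ∫ u in t..(0:ℝ), |u| * Real.sqrt (p u) = ∫ u in t..(0:ℝ), -(r u) := by
          apply intervalIntegral.integral_congr
          intro u hu
          rw [Set.uIcc_of_le (le_of_lt htn)] at hu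
          have hu1 : u ≤ 0 := hu.2
          have hu2 : t ≤ u := hu.1
          have hu3 : |u| ≤ ε₀/2 := by
            rw [abs_of_nonpos hu1]
            have := neg_le_abs t
            linarith
          simp only [hr_def]
          rw [abs_of_nonpos hu1, hiq u hu3]
          ring
        have e3 : ∫ u in t..(0:ℝ), -(r u) = -∫ u in t..(0:ℝ), r u :=
          intervalIntegral.integral_neg
        have e4 : ∫ u in t..(0:ℝ), r u = -∫ u in (0:ℝ)..t, r u :=
          intervalIntegral.integral_symm 0 t
        have hsg0 : sG γ t ≤ 0 := by
          rw [hsGt, symm1]; linarith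
        rw [abs_of_nonpos hsg0, hsGt, symm1, neg_neg, e1, e3, e4, hS_def]
        ring_nf
    have hdet : det2 (deriv γ t) (iteratedDeriv 2 γ t) = t ^ 2 * D t := by
      rw [det2, hAe t, hIter2 t]
      have h1 : (t • A t).1 = t * (A t).1 := rfl
      have h2 : (t • A t).2 = t * (A t).2 := rfl
      have h3 : (A t + t • deriv A t).1 = (A t).1 + t * (deriv A t).1 := rfl
      have h4 : (A t + t • deriv A t).2 = (A t).2 + t * (deriv A t).2 := rfl
      rw [h1, h2, h3, h4, hD_def]
      ring
    have hSt : |sG γ t| = t ^ 2 * H t := habs.trans (hSH t)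
    show Real.sqrt (H t) * D t / Real.sqrt (p t) ^ 3 = _
    rw [kappaG, hdet, henorm t, hSt]
    have h1 : Real.sqrt (t ^ 2 * H t) = |t| * Real.sqrt (H t) := by
      rw [Real.sqrt_mul (sq_nonneg t), Real.sqrt_sq_eq_abs]
    rw [h1]
    have habsne : |t| ≠ 0 := abs_ne_zero.mpr htne
    have hsp : Real.sqrt (p t) ≠ 0 := Real.sqrt_ne_zero'.mpr hpt
    have ht2 : t ^ 2 = |t| ^ 2 := (sq_abs t).symm
    field_simp
    rw [ht2]
end
end

section
/- Let γ : ℝ → ℝ² be a C^∞ curve with a 3/2-cusp at t = 0. Then lim_{t→0} √(|s_g(t)|)·κ_g(t) = μ_g/(2√2), where μ_g is the Euclidean cuspidal curvature of γ at t = 0. -/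
noncomputable section
open Real Set Filter Topology

/-- Projection of a `HasDerivAt` for pair-valued functions: first coordinate. -/
lemma HasDerivAt.fst2 {f : ℝ → ℝ × ℝ} {f' : ℝ × ℝ} {x : ℝ} (h : HasDerivAt f f' x) :
    HasDerivAt (fun t => (f t).1) f'.1 x :=
  (ContinuousLinearMap.fst ℝ ℝ ℝ).hasFDerivAt.comp_hasDerivAt x h

/-- Projection of a `HasDerivAt` for pair-valued functions: second coordinate. -/
lemma HasDerivAt.snd2 {f : ℝ → ℝ × ℝ} {f' : ℝ × ℝ} {x : ℝ} (h : HasDerivAt f f' x) :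
    HasDerivAt (fun t => (f t).2) f'.2 x :=
  (ContinuousLinearMap.snd ℝ ℝ ℝ).hasFDerivAt.comp_hasDerivAt x h

lemma hasDerivAt_det2 {f g : ℝ → ℝ × ℝ} {f' g' : ℝ × ℝ} {x : ℝ}
    (hf : HasDerivAt f f' x) (hg : HasDerivAt g g' x) :
    HasDerivAt (fun t => det2 (f t) (g t)) (det2 f' (g x) + det2 (f x) g') x := by
  have h := (hf.fst2.fun_mul hg.snd2).fun_sub (hf.snd2.fun_mul hg.fst2)
  simp only [det2]
  convert h using 1 <;> first | rfl | ring

lemma enorm2_smul (c : ℝ) (v : ℝ × ℝ) : enorm2 (c • v) = |c| * enorm2 v := by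
  simp only [enorm2, Prod.smul_fst, Prod.smul_snd, smul_eq_mul]
  rw [show (c * v.1) ^ 2 + (c * v.2) ^ 2 = c ^ 2 * (v.1 ^ 2 + v.2 ^ 2) by ring,
    Real.sqrt_mul (sq_nonneg c), Real.sqrt_sq_eq_abs]

lemma enorm2_continuous : Continuous enorm2 := by
  unfold enorm2
  exact ((continuous_fst.pow 2).add (continuous_snd.pow 2)).sqrt

lemma enorm2_pos {v : ℝ × ℝ} (hv : v ≠ 0) : 0 < enorm2 v := by
  have h : v.1 ≠ 0 ∨ v.2 ≠ 0 := by
    by_contra h; push_neg at h; exact hv (Prod.ext h.1 h.2)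
  apply Real.sqrt_pos.2
  rcases h with h | h
  · have : 0 < v.1 ^ 2 := by positivity
    nlinarith [sq_nonneg v.2]
  · have : 0 < v.2 ^ 2 := by positivity
    nlinarith [sq_nonneg v.1]

/-- At a 3/2-cusp, `lim_{t→0} √|s_g(t)|·κ_g(t) = μ_g/(2√2)`. -/
theorem stmt_2 (γ : ℝ → ℝ × ℝ) (hγ : ContDiff ℝ (⊤:ℕ∞) γ) (hcusp : HasCusp γ) :
    Tendsto (fun t => Real.sqrt |sG γ t| * kappaG γ t) (𝓝[≠] (0:ℝ))
      (𝓝 (muG γ / (2 * Real.sqrt 2))) := by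
  obtain ⟨h0, hD⟩ := hcusp
  set a : ℝ × ℝ := iteratedDeriv 2 γ 0 with ha
  have hane : a ≠ 0 := by
    intro h; apply hD; rw [h]; simp [det2]
  set N : ℝ := enorm2 a with hNdef
  have hN : 0 < N := enorm2_pos hane
  set D : ℝ := det2 a (iteratedDeriv 3 γ 0) with hDdef
  -- differentiability infrastructure
  have hsm : ∀ n : ℕ, ContDiff ℝ (⊤:ℕ∞) (iteratedDeriv n γ) := by
    intro n; rw [iteratedDeriv_eq_iterate]; exact hγ.iterate_deriv n
  have hder : ∀ (n : ℕ) (t : ℝ), HasDerivAt (iteratedDeriv n γ) (iteratedDeriv (n+1) γ t) t := by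
    intro n t
    rw [iteratedDeriv_succ]
    exact ((hsm n).differentiable (by simp) t).hasDerivAt
  have hder1 : ∀ t : ℝ, HasDerivAt (deriv γ) (iteratedDeriv 2 γ t) t := by
    intro t
    have h := hder 1 t
    rwa [iteratedDeriv_one] at h
  set F : ℝ → ℝ := fun t => det2 (deriv γ t) (iteratedDeriv 2 γ t) with hFdef
  set F' : ℝ → ℝ := fun t => det2 (deriv γ t) (iteratedDeriv 3 γ t) with hF'def
  have hF : ∀ t, HasDerivAt F (F' t) t := by
    intro t
    have h := hasDerivAt_det2 (hder1 t) (hder 2 t)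
    convert h using 1
    rw [hF'def]
    norm_num [det2]
    ring
  have hF'0 : HasDerivAt F' D 0 := by
    have h := hasDerivAt_det2 (hder1 0) (hder 3 0)
    convert h using 1
    rw [hDdef]
    norm_num [det2, h0]; rfl
  have hF0 : F 0 = 0 := by simp [hFdef, det2, h0]
  have hF'00 : F' 0 = 0 := by simp [hF'def, det2, h0]
  set n : ℝ → ℝ := fun t => enorm2 (deriv γ t) with hndef
  have hncont : Continuous n := by
    apply enorm2_continuous.comp
    exact hγ.continuous_deriv (by exact_mod_cast le_top)
  have hsGd : ∀ t, HasDerivAt (sG γ) (n t) t := by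
    intro t
    exact (hncont.integral_hasStrictDerivAt 0 t).hasDerivAt
  have hsG0 : sG γ 0 = 0 := intervalIntegral.integral_same
  -- the slope limit
  have hslope : Tendsto (fun t : ℝ => t⁻¹ • deriv γ t) (𝓝[≠] (0:ℝ)) (𝓝 a) := by
    have h := hasDerivAt_iff_tendsto_slope.mp (hder1 0)
    rw [← ha] at h
    refine h.congr (fun t => ?_)
    simp [slope_def_module, h0]
  -- C : n t / |t| → N
  have hC : Tendsto (fun t : ℝ => n t / |t|) (𝓝[≠] (0:ℝ)) (𝓝 N) := by
    have h := (enorm2_continuous.tendsto a).comp hslope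
    refine h.congr' ?_
    filter_upwards [self_mem_nhdsWithin] with t ht
    have ht0 : t ≠ 0 := ht
    simp only [Function.comp]
    rw [enorm2_smul, abs_inv, inv_mul_eq_div]
  -- B : F t / t² → D/2
  have hB : Tendsto (fun t : ℝ => F t / t ^ 2) (𝓝[≠] (0:ℝ)) (𝓝 (D / 2)) := by
    apply HasDerivAt.lhopital_zero_nhdsNE (f' := F') (g' := fun t => 2 * t)
    · filter_upwards with t; exact hF t
    · filter_upwards with t
      simpa using ((hasDerivAt_id t).fun_pow 2)
    · filter_upwards [self_mem_nhdsWithin] with t ht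
      exact mul_ne_zero two_ne_zero ht
    · have := (hF 0).continuousAt.tendsto
      rw [hF0] at this
      exact this.mono_left nhdsWithin_le_nhds
    · have : Tendsto (fun t : ℝ => t ^ 2) (𝓝 0) (𝓝 0) := by
        simpa using (continuous_pow 2).tendsto (0:ℝ)
      exact this.mono_left nhdsWithin_le_nhds
    · have h := hasDerivAt_iff_tendsto_slope.mp hF'0
      have h2 : Tendsto (fun t => slope F' 0 t / 2) (𝓝[≠] (0:ℝ)) (𝓝 (D / 2)) := h.div_const 2
      refine h2.congr' ?_
      filter_upwards [self_mem_nhdsWithin] with t ht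
      have ht0 : (t:ℝ) ≠ 0 := ht
      rw [slope_def_field, hF'00, sub_zero, sub_zero, div_div]
      ring
  -- |sG|/t² → N/2, via one-sided L'Hôpital
  have hRdiv : Tendsto (fun t : ℝ => n t / (2 * t)) (𝓝[>] (0:ℝ)) (𝓝 (N / 2)) := by
    have h := (hC.mono_left (nhdsWithin_mono 0 (fun x hx => ne_of_gt hx))).div_const 2
    refine h.congr' ?_
    filter_upwards [self_mem_nhdsWithin] with t ht
    rw [abs_of_pos ht, div_div, mul_comm]
  have hLdiv : Tendsto (fun t : ℝ => n t / (2 * t)) (𝓝[<] (0:ℝ)) (𝓝 (-(N / 2))) := by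
    have h := ((hC.mono_left (nhdsWithin_mono 0 (fun x hx => ne_of_lt hx))).div_const 2).neg
    refine h.congr' ?_
    filter_upwards [self_mem_nhdsWithin] with t ht
    rw [abs_of_neg ht, div_neg, neg_div, neg_neg, div_div, mul_comm]
  have hsGcont0 : Tendsto (sG γ) (𝓝 0) (𝓝 0) := by
    have := (hsGd 0).continuousAt.tendsto
    rwa [hsG0] at this
  have hsq0 : Tendsto (fun t : ℝ => t ^ 2) (𝓝 0) (𝓝 0) := by
    simpa using (continuous_pow 2).tendsto (0:ℝ)
  have hR : Tendsto (fun t : ℝ => sG γ t / t ^ 2) (𝓝[>] (0:ℝ)) (𝓝 (N / 2)) := by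
    apply HasDerivAt.lhopital_zero_nhdsGT (f' := n) (g' := fun t => 2 * t)
    · filter_upwards with t; exact hsGd t
    · filter_upwards with t; simpa using ((hasDerivAt_id t).fun_pow 2)
    · filter_upwards [self_mem_nhdsWithin] with t ht
      exact mul_ne_zero two_ne_zero (ne_of_gt ht)
    · exact hsGcont0.mono_left nhdsWithin_le_nhds
    · exact hsq0.mono_left nhdsWithin_le_nhds
    · exact hRdiv
  have hL : Tendsto (fun t : ℝ => sG γ t / t ^ 2) (𝓝[<] (0:ℝ)) (𝓝 (-(N / 2))) := by
    apply HasDerivAt.lhopital_zero_nhdsLT (f' := n) (g' := fun t => 2 * t)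
    · filter_upwards with t; exact hsGd t
    · filter_upwards with t; simpa using ((hasDerivAt_id t).fun_pow 2)
    · filter_upwards [self_mem_nhdsWithin] with t ht
      exact mul_ne_zero two_ne_zero (ne_of_lt ht)
    · exact hsGcont0.mono_left nhdsWithin_le_nhds
    · exact hsq0.mono_left nhdsWithin_le_nhds
    · exact hLdiv
  have hA2 : Tendsto (fun t : ℝ => |sG γ t| / t ^ 2) (𝓝[≠] (0:ℝ)) (𝓝 (N / 2)) := by
    have hRa : Tendsto (fun t : ℝ => |sG γ t / t ^ 2|) (𝓝[>] (0:ℝ)) (𝓝 (N / 2)) := by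
      have := hR.abs
      rwa [abs_of_nonneg (by positivity)] at this
    have hLa : Tendsto (fun t : ℝ => |sG γ t / t ^ 2|) (𝓝[<] (0:ℝ)) (𝓝 (N / 2)) := by
      have := hL.abs
      rwa [abs_neg, abs_of_nonneg (by positivity)] at this
    have hcomb : Tendsto (fun t : ℝ => |sG γ t / t ^ 2|) (𝓝[≠] (0:ℝ)) (𝓝 (N / 2)) := by
      rw [← nhdsLT_sup_nhdsGT]
      rw [tendsto_sup]
      exact ⟨hLa, hRa⟩
    refine hcomb.congr (fun t => ?_)
    rw [abs_div, abs_of_nonneg (sq_nonneg t)]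
  have hA : Tendsto (fun t : ℝ => Real.sqrt |sG γ t| / |t|) (𝓝[≠] (0:ℝ))
      (𝓝 (Real.sqrt (N / 2))) := by
    have h := (Real.continuous_sqrt.tendsto (N / 2)).comp hA2
    refine h.congr (fun t => ?_)
    simp only [Function.comp]
    rw [Real.sqrt_div (abs_nonneg _), Real.sqrt_sq_eq_abs]
  -- combine
  have hNcube : (N : ℝ) ^ 3 ≠ 0 := by positivity
  have key : Tendsto (fun t : ℝ => Real.sqrt |sG γ t| / |t| * (F t / t ^ 2) / (n t / |t|) ^ 3)
      (𝓝[≠] (0:ℝ)) (𝓝 (Real.sqrt (N / 2) * (D / 2) / N ^ 3)) :=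
    (hA.mul hB).div (hC.pow 3) hNcube
  have hconst : Real.sqrt (N / 2) * (D / 2) / N ^ 3 = muG γ / (2 * Real.sqrt 2) := by
    have h52 : N ^ ((5:ℝ)/2) = N ^ 2 * Real.sqrt N := by
      rw [show (5:ℝ)/2 = (2:ℕ) + 1/2 by norm_num, Real.rpow_add hN, Real.rpow_natCast,
        Real.sqrt_eq_rpow]
    rw [muG, ← ha, ← hNdef, ← hDdef, h52, Real.sqrt_div hN.le]
    have hs2 : Real.sqrt 2 ≠ 0 := by positivity
    have hsN : Real.sqrt N ≠ 0 := by positivity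
    have hN0 : N ≠ 0 := hN.ne'
    have hN3 : N ^ 3 = N ^ 2 * (Real.sqrt N * Real.sqrt N) := by
      rw [Real.mul_self_sqrt hN.le]; ring
    rw [hN3]
    field_simp
  rw [← hconst]
  refine key.congr' ?_
  filter_upwards [self_mem_nhdsWithin, hC.eventually_ne hN.ne'] with t ht hne
  have ht0 : (t:ℝ) ≠ 0 := ht
  have habs : |t| ≠ 0 := abs_ne_zero.2 ht0
  have hnt : n t ≠ 0 := by
    intro h; exact hne (by rw [h]; simp)
  have h3 : |t| ^ 3 = t ^ 2 * |t| := by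
    rw [pow_succ, sq_abs]
  simp only [kappaG, ← hFdef, ← hndef]
  change _ = Real.sqrt |sG γ t| * (F t / n t ^ 3)
  rw [div_pow, h3]
  field_simp
end
end

section
/- Let f : ℝ → ℝ be a C^∞ function with f(0) ≠ 0, set θ(τ) := 2∫₀^τ f(u) du and γ(τ) := 2∫₀^τ u·(cos θ(u), sin θ(u)) du. Then γ is a C^∞ curve with a 3/2-cusp at τ = 0, ‖γ'(τ)‖ = 2|τ| for all τ (so τ is the half-arclength parameter, i.e. |s_g(τ)| = τ²), and √(|s_g(τ)|)·κ_g(τ) = f(τ) for all τ ≠ 0 near 0. -/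
noncomputable section
open Real Set Filter Topology

lemma antideriv_hasDerivAt {g : ℝ → ℝ} (hg : Continuous g) (s : ℝ) :
    HasDerivAt (fun t => ∫ u in (0:ℝ)..t, g u) (g s) s :=
  intervalIntegral.integral_hasDerivAt_right (hg.intervalIntegrable _ _)
    (hg.stronglyMeasurableAtFilter _ _) hg.continuousAt

lemma antideriv_contDiff {g : ℝ → ℝ} (hg : ContDiff ℝ (⊤:ℕ∞) g) :
    ContDiff ℝ (⊤:ℕ∞) (fun s => ∫ u in (0:ℝ)..s, g u) := by
  rw [contDiff_infty_iff_deriv]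
  refine ⟨fun s => (antideriv_hasDerivAt hg.continuous s).differentiableAt, ?_⟩
  have : deriv (fun s => ∫ u in (0:ℝ)..s, g u) = g :=
    funext fun s => (antideriv_hasDerivAt hg.continuous s).deriv
  rw [this]; exact hg

lemma abs_antideriv (x : ℝ) : HasDerivAt (fun y : ℝ => y * |y|) (2 * |x|) x := by
  rcases lt_trichotomy x 0 with h | h | h
  · have : (fun y : ℝ => y * -y) =ᶠ[𝓝 x] fun y => y * |y| := by
      filter_upwards [eventually_lt_nhds h] with y hy
      rw [abs_of_neg hy]
    have h2 : HasDerivAt (fun y : ℝ => y * -y) (2 * |x|) x := by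
      have := ((hasDerivAt_id x).fun_mul (hasDerivAt_id x).fun_neg)
      refine this.congr_deriv ?_
      (try simp only [id]); rw [abs_of_neg h]; ring
    exact h2.congr_of_eventuallyEq this.symm
  · subst h
    rw [hasDerivAt_iff_tendsto_slope]
    have : (fun y : ℝ => |y|) =ᶠ[𝓝[≠] (0:ℝ)] slope (fun y : ℝ => y * |y|) 0 := by
      filter_upwards [self_mem_nhdsWithin] with y (hy : y ≠ 0)
      simp [slope, hy]
    refine Tendsto.congr' this ?_
    simp only [abs_zero, mul_zero]
    have := continuous_abs.tendsto (0:ℝ)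
    simpa using this.mono_left nhdsWithin_le_nhds
  · have : (fun y : ℝ => y * y) =ᶠ[𝓝 x] fun y => y * |y| := by
      filter_upwards [eventually_gt_nhds h] with y hy
      rw [abs_of_pos hy]
    have h2 : HasDerivAt (fun y : ℝ => y * y) (2 * |x|) x := by
      have := ((hasDerivAt_id x).fun_mul (hasDerivAt_id x))
      refine this.congr_deriv ?_
      (try simp only [id]); rw [abs_of_pos h]; ring
    exact h2.congr_of_eventuallyEq this.symm

/-- Realization: given `f` smooth with `f(0) ≠ 0`, the curve
`γ(τ) = 2∫₀^τ u·(cos θ(u), sin θ(u)) du`, `θ(τ) = 2∫₀^τ f`, has a 3/2-cusp at `0`,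
satisfies `‖γ'(τ)‖ = 2|τ|` (τ is the half-arclength parameter, `|s_g(τ)| = τ²`),
and its normalized curvature is `f`. -/
theorem stmt_3 (f : ℝ → ℝ) (hf : ContDiff ℝ (⊤:ℕ∞) f) (hf0 : f 0 ≠ 0)
    (θ : ℝ → ℝ) (hθ : ∀ s, θ s = 2 * ∫ u in (0:ℝ)..s, f u)
    (γ : ℝ → ℝ × ℝ)
    (hγdef : ∀ s, γ s = (2 * ∫ u in (0:ℝ)..s, u * Real.cos (θ u),
                          2 * ∫ u in (0:ℝ)..s, u * Real.sin (θ u))) :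
    ContDiff ℝ (⊤:ℕ∞) γ ∧ HasCusp γ ∧
      (∀ s, enorm2 (deriv γ s) = 2 * |s|) ∧
      (∀ s, |sG γ s| = s ^ 2) ∧
      ∃ ε > (0:ℝ), ∀ s ∈ Set.Ioo (-ε) ε, s ≠ 0 →
        Real.sqrt |sG γ s| * kappaG γ s = f s := by
  have hγ : γ = fun s => (2 * ∫ u in (0:ℝ)..s, u * Real.cos (θ u),
      2 * ∫ u in (0:ℝ)..s, u * Real.sin (θ u)) := funext hγdef
  have hθsm : ContDiff ℝ (⊤:ℕ∞) θ := by
    have h : θ = fun s => 2 * ∫ u in (0:ℝ)..s, f u := funext hθ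
    rw [h]; exact contDiff_const.mul (antideriv_contDiff hf)
  have hθd : ∀ s, HasDerivAt θ (2 * f s) s := by
    intro s
    have h : θ = fun s => 2 * ∫ u in (0:ℝ)..s, f u := funext hθ
    rw [h]
    exact (antideriv_hasDerivAt hf.continuous s).const_mul 2
  have hθ0 : θ 0 = 0 := by rw [hθ]; simp
  have hc1 : ContDiff ℝ (⊤:ℕ∞) (fun u => u * Real.cos (θ u)) :=
    contDiff_id.mul (Real.contDiff_cos.comp hθsm)
  have hc2 : ContDiff ℝ (⊤:ℕ∞) (fun u => u * Real.sin (θ u)) :=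
    contDiff_id.mul (Real.contDiff_sin.comp hθsm)
  have hγsm : ContDiff ℝ (⊤:ℕ∞) γ := by
    rw [hγ]
    exact (contDiff_const.mul (antideriv_contDiff hc1)).prodMk
      (contDiff_const.mul (antideriv_contDiff hc2))
  -- first derivative
  have hdγ : ∀ s, HasDerivAt γ
      (2 * s * Real.cos (θ s), 2 * s * Real.sin (θ s)) s := by
    intro s
    rw [hγ]
    have h1 := (antideriv_hasDerivAt hc1.continuous s).const_mul 2
    have h2 := (antideriv_hasDerivAt hc2.continuous s).const_mul 2
    have := h1.prodMk h2
    convert this using 2 <;> ring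
  have hderivγ : deriv γ = fun s => (2 * s * Real.cos (θ s), 2 * s * Real.sin (θ s)) :=
    funext fun s => (hdγ s).deriv
  -- second derivative
  have hsin : ∀ s, HasDerivAt (fun t => Real.sin (θ t)) (Real.cos (θ s) * (2 * f s)) s :=
    fun s => (Real.hasDerivAt_sin (θ s)).comp s (hθd s)
  have hcos : ∀ s, HasDerivAt (fun t => Real.cos (θ t)) (-Real.sin (θ s) * (2 * f s)) s :=
    fun s => (Real.hasDerivAt_cos (θ s)).comp s (hθd s)
  have hdc : ∀ s, HasDerivAt (fun t => (2 * t * Real.cos (θ t), 2 * t * Real.sin (θ t)))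
      (2 * Real.cos (θ s) - 4 * s * f s * Real.sin (θ s),
       2 * Real.sin (θ s) + 4 * s * f s * Real.cos (θ s)) s := by
    intro s
    have hA : HasDerivAt (fun t => 2 * t * Real.cos (θ t))
        (2 * Real.cos (θ s) - 4 * s * f s * Real.sin (θ s)) s := by
      have := ((hasDerivAt_id s).const_mul 2).fun_mul (hcos s)
      refine this.congr_deriv ?_
      (try simp only [id]); ring
    have hB : HasDerivAt (fun t => 2 * t * Real.sin (θ t))
        (2 * Real.sin (θ s) + 4 * s * f s * Real.cos (θ s)) s := by
      have := ((hasDerivAt_id s).const_mul 2).fun_mul (hsin s)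
      refine this.congr_deriv ?_
      (try simp only [id]); ring
    exact hA.prodMk hB
  have hit2 : iteratedDeriv 2 γ = fun s =>
      (2 * Real.cos (θ s) - 4 * s * f s * Real.sin (θ s),
       2 * Real.sin (θ s) + 4 * s * f s * Real.cos (θ s)) := by
    rw [iteratedDeriv_succ, iteratedDeriv_one, hderivγ]
    exact funext fun s => (hdc s).deriv
  -- third derivative at 0
  have hdf0 : HasDerivAt f (deriv f 0) 0 :=
    ((hf.differentiable (by simp)) 0).hasDerivAt
  have hd3A : HasDerivAt (fun s => 2 * Real.cos (θ s) - 4 * s * f s * Real.sin (θ s)) 0 0 := by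
    have := ((hcos 0).const_mul 2).fun_sub
      ((((hasDerivAt_id 0).const_mul 4).fun_mul hdf0).fun_mul (hsin 0))
    refine this.congr_deriv ?_
    simp [hθ0]
  have hd3B : HasDerivAt (fun s => 2 * Real.sin (θ s) + 4 * s * f s * Real.cos (θ s))
      (8 * f 0) 0 := by
    have := ((hsin 0).const_mul 2).fun_add
      ((((hasDerivAt_id 0).const_mul 4).fun_mul hdf0).fun_mul (hcos 0))
    refine this.congr_deriv ?_
    simp [hθ0]; ring
  have hit3 : iteratedDeriv 3 γ 0 = (0, 8 * f 0) := by
    rw [iteratedDeriv_succ, hit2]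
    exact (hd3A.prodMk hd3B).deriv
  -- claim 3 : norm of derivative
  have hnorm : ∀ s, enorm2 (deriv γ s) = 2 * |s| := by
    intro s
    rw [hderivγ]
    show Real.sqrt ((2 * s * Real.cos (θ s)) ^ 2 + (2 * s * Real.sin (θ s)) ^ 2) = 2 * |s|
    have h : (2 * s * Real.cos (θ s)) ^ 2 + (2 * s * Real.sin (θ s)) ^ 2 = (2 * |s|) ^ 2 := by
      have h2 : |s| ^ 2 = s ^ 2 := sq_abs s
      nlinarith [Real.sin_sq_add_cos_sq (θ s)]
    rw [h, Real.sqrt_sq (by positivity)]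
  -- claim 4 : arclength
  have hsG : ∀ s, sG γ s = s * |s| := by
    intro s
    have h1 : sG γ s = ∫ u in (0:ℝ)..s, 2 * |u| := by
      unfold sG
      exact intervalIntegral.integral_congr fun u _ => hnorm u
    rw [h1, intervalIntegral.integral_eq_sub_of_hasDerivAt
        (fun x _ => abs_antideriv x)
        ((continuous_const.mul continuous_abs).intervalIntegrable _ _)]
    simp
  have hsGabs : ∀ s, |sG γ s| = s ^ 2 := by
    intro s
    rw [hsG, abs_mul, abs_abs, ← sq, sq_abs]
  refine ⟨hγsm, ⟨?_, ?_⟩, hnorm, hsGabs, 1, one_pos, ?_⟩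
  · rw [hderivγ]; simp
  · rw [hit3]
    have h2 : iteratedDeriv 2 γ 0 = (2, 0) := by rw [hit2]; simp [hθ0]
    rw [h2]
    simp [det2]
    intro h; exact hf0 h
  · intro s _ hs0
    have habs : |s| ≠ 0 := abs_ne_zero.mpr hs0
    rw [hsGabs, Real.sqrt_sq_eq_abs]
    unfold kappaG
    rw [hit2, hnorm, hderivγ]
    show |s| * (det2 (2 * s * Real.cos (θ s), 2 * s * Real.sin (θ s))
        (2 * Real.cos (θ s) - 4 * s * f s * Real.sin (θ s),
         2 * Real.sin (θ s) + 4 * s * f s * Real.cos (θ s)) / (2 * |s|) ^ 3) = f s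
    have hdet : det2 (2 * s * Real.cos (θ s), 2 * s * Real.sin (θ s))
        (2 * Real.cos (θ s) - 4 * s * f s * Real.sin (θ s),
         2 * Real.sin (θ s) + 4 * s * f s * Real.cos (θ s)) = 8 * s ^ 2 * f s := by
      simp only [det2]
      linear_combination (8 * s ^ 2 * f s) * Real.sin_sq_add_cos_sq (θ s)
    rw [hdet]
    have hcube : (2 * |s|) ^ 3 = 8 * (s ^ 2 * |s|) := by
      rw [mul_pow, show |s| ^ 3 = s ^ 2 * |s| from by rw [pow_succ, sq_abs]]; ring
    rw [hcube]
    field_simp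
end
end

section
/- Let γ : ℝ → ℝ² be a C^∞ curve with a positive 3/2-cusp at t = 0 (i.e. [γ''(0), γ'''(0)] > 0). Then there exist an orientation preserving equi-affine transformation T of ℝ² (det of the linear part equal to 1) and a C^∞ change of parameter t = t(u) near u = 0 with t(0) = 0 and dt/du > 0 such that T(γ(t(u))) − (u², u³ + μ_A·u⁵/(80·54^{1/5})) has order higher than u⁵ at u = 0, where μ_A is the affine cuspidal curvature of γ at t = 0. -/
noncomputable section
open Real Set Filter Topology

/-- tail coefficients of `(al*u+be*u^2+pp*u^3+qq*u^4)^2` from degree 6 on, shifted by `u^6`. -/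
noncomputable def s2 (al be pp qq u : ℝ) : ℝ :=
  (pp^2 + 2*be*qq) * u^0 + (2*pp*qq) * u^1 + (qq^2) * u^2

noncomputable def s3 (al be pp qq u : ℝ) : ℝ :=
  (be^3 + 6*al*be*pp + 3*al^2*qq) * u^0 + (3*be^2*pp + 3*al*pp^2 + 6*al*be*qq) * u^1 + (3*be*pp^2 + 3*be^2*qq + 6*al*pp*qq) * u^2 + (pp^3 + 6*be*pp*qq + 3*al*qq^2) * u^3 + (3*pp^2*qq + 3*be*qq^2) * u^4 + (3*pp*qq^2) * u^5 + (qq^3) * u^6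

noncomputable def s4 (al be pp qq u : ℝ) : ℝ :=
  (6*al^2*be^2 + 4*al^3*pp) * u^0 + (4*al*be^3 + 12*al^2*be*pp + 4*al^3*qq) * u^1 + (be^4 + 12*al*be^2*pp + 6*al^2*pp^2 + 12*al^2*be*qq) * u^2 + (4*be^3*pp + 12*al*be*pp^2 + 12*al*be^2*qq + 12*al^2*pp*qq) * u^3 + (6*be^2*pp^2 + 4*be^3*qq + 4*al*pp^3 + 24*al*be*pp*qq + 6*al^2*qq^2) * u^4 + (4*be*pp^3 + 12*be^2*pp*qq + 12*al*pp^2*qq + 12*al*be*qq^2) * u^5 + (pp^4 + 12*be*pp^2*qq + 6*be^2*qq^2 + 12*al*pp*qq^2) * u^6 + (4*pp^3*qq + 12*be*pp*qq^2 + 4*al*qq^3) * u^7 + (6*pp^2*qq^2 + 4*be*qq^3) * u^8 + (4*pp*qq^3) * u^9 + (qq^4) * u^10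

noncomputable def s5 (al be pp qq u : ℝ) : ℝ :=
  (5*al^4*be) * u^0 + (10*al^3*be^2 + 5*al^4*pp) * u^1 + (10*al^2*be^3 + 20*al^3*be*pp + 5*al^4*qq) * u^2 + (5*al*be^4 + 30*al^2*be^2*pp + 10*al^3*pp^2 + 20*al^3*be*qq) * u^3 + (be^5 + 20*al*be^3*pp + 30*al^2*be*pp^2 + 30*al^2*be^2*qq + 20*al^3*pp*qq) * u^4 + (5*be^4*pp + 30*al*be^2*pp^2 + 20*al*be^3*qq + 10*al^2*pp^3 + 60*al^2*be*pp*qq + 10*al^3*qq^2) * u^5 + (10*be^3*pp^2 + 5*be^4*qq + 20*al*be*pp^3 + 60*al*be^2*pp*qq + 30*al^2*pp^2*qq + 30*al^2*be*qq^2) * u^6 + (10*be^2*pp^3 + 20*be^3*pp*qq + 5*al*pp^4 + 60*al*be*pp^2*qq + 30*al*be^2*qq^2 + 30*al^2*pp*qq^2) * u^7 + (5*be*pp^4 + 30*be^2*pp^2*qq + 10*be^3*qq^2 + 20*al*pp^3*qq + 60*al*be*pp*qq^2 + 10*al^2*qq^3) * u^8 + (pp^5 + 20*be*pp^3*qq +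 30*be^2*pp*qq^2 + 30*al*pp^2*qq^2 + 20*al*be*qq^3) * u^9 + (5*pp^4*qq + 30*be*pp^2*qq^2 + 10*be^2*qq^3 + 20*al*pp*qq^3) * u^10 + (10*pp^3*qq^2 + 20*be*pp*qq^3 + 5*al*qq^4) * u^11 + (10*pp^2*qq^3 + 5*be*qq^4) * u^12 + (5*pp*qq^4) * u^13 + (qq^5) * u^14

lemma master5 (al be pp qq c2 c3 c4 c5 u : ℝ) :
    c2*(al*u+be*u^2+pp*u^3+qq*u^4)^2 + c3*(al*u+be*u^2+pp*u^3+qq*u^4)^3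
      + c4*(al*u+be*u^2+pp*u^3+qq*u^4)^4 + c5*(al*u+be*u^2+pp*u^3+qq*u^4)^5
    = u^2*(al^2*c2) + u^3*(2*al*be*c2 + al^3*c3)
      + u^4*((be^2+2*al*pp)*c2 + 3*al^2*be*c3 + al^4*c4)
      + u^5*(2*(al*qq+be*pp)*c2 + (3*al^2*pp+3*al*be^2)*c3 + 4*al^3*be*c4 + al^5*c5)
      + u^6*(s2 al be pp qq u * c2 + s3 al be pp qq u * c3 + s4 al be pp qq u * c4
          + s5 al be pp qq u * c5) := by
  simp only [s2, s3, s4, s5]; ring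

lemma quintHasDeriv (c0 c1 c2 c3 c4 c5 s : ℝ) :
    HasDerivAt (fun x : ℝ => c0 + c1*x + c2*x^2 + c3*x^3 + c4*x^4 + c5*x^5)
      (c1 + 2*c2*s + 3*c3*s^2 + 4*c4*s^3 + 5*c5*s^4) s := by
  have h : HasDerivAt (fun x : ℝ => c0 + c1*x + c2*x^2 + c3*x^3 + c4*x^4 + c5*x^5)
      (((((0 + c1*1) + c2*((2:ℕ)*s^1)) + c3*((3:ℕ)*s^2)) + c4*((4:ℕ)*s^3)) + c5*((5:ℕ)*s^4)) s :=
    (((((hasDerivAt_const s c0).add ((hasDerivAt_id s).const_mul c1)).add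
      ((hasDerivAt_pow 2 s).const_mul c2)).add ((hasDerivAt_pow 3 s).const_mul c3)).add
      ((hasDerivAt_pow 4 s).const_mul c4)).add ((hasDerivAt_pow 5 s).const_mul c5)
  convert h using 1
  push_cast; ring

lemma quint_deriv (c0 c1 c2 c3 c4 c5 : ℝ) :
    deriv (fun x : ℝ => c0 + c1*x + c2*x^2 + c3*x^3 + c4*x^4 + c5*x^5)
      = fun x : ℝ => c1 + (2*c2)*x + (3*c3)*x^2 + (4*c4)*x^3 + (5*c5)*x^4 + 0*x^5 := by
  funext s
  rw [(quintHasDeriv c0 c1 c2 c3 c4 c5 s).deriv]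
  ring

lemma quint_contDiff (c0 c1 c2 c3 c4 c5 : ℝ) :
    ContDiff ℝ (⊤:ℕ∞) (fun x : ℝ => c0 + c1*x + c2*x^2 + c3*x^3 + c4*x^4 + c5*x^5) := by
  fun_prop

lemma quint_it0 (c0 c1 c2 c3 c4 c5 : ℝ) :
    iteratedDeriv 0 (fun x : ℝ => c0 + c1*x + c2*x^2 + c3*x^3 + c4*x^4 + c5*x^5) 0 = c0 := by
  rw [iteratedDeriv_zero]; norm_num

lemma quint_it1 (c0 c1 c2 c3 c4 c5 : ℝ) :
    iteratedDeriv 1 (fun x : ℝ => c0 + c1*x + c2*x^2 + c3*x^3 + c4*x^4 + c5*x^5) 0 = c1 := by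
  rw [iteratedDeriv_one, quint_deriv]; norm_num

lemma quint_it2 (c0 c1 c2 c3 c4 c5 : ℝ) :
    iteratedDeriv 2 (fun x : ℝ => c0 + c1*x + c2*x^2 + c3*x^3 + c4*x^4 + c5*x^5) 0 = 2*c2 := by
  rw [show (2:ℕ) = 1+1 from rfl, iteratedDeriv_succ', quint_deriv, quint_it1]

lemma quint_it3 (c0 c1 c2 c3 c4 c5 : ℝ) :
    iteratedDeriv 3 (fun x : ℝ => c0 + c1*x + c2*x^2 + c3*x^3 + c4*x^4 + c5*x^5) 0 = 6*c3 := by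
  rw [show (3:ℕ) = 2+1 from rfl, iteratedDeriv_succ', quint_deriv, quint_it2]; ring

lemma quint_it4 (c0 c1 c2 c3 c4 c5 : ℝ) :
    iteratedDeriv 4 (fun x : ℝ => c0 + c1*x + c2*x^2 + c3*x^3 + c4*x^4 + c5*x^5) 0 = 24*c4 := by
  rw [show (4:ℕ) = 3+1 from rfl, iteratedDeriv_succ', quint_deriv, quint_it3]; ring

lemma quint_it5 (c0 c1 c2 c3 c4 c5 : ℝ) :
    iteratedDeriv 5 (fun x : ℝ => c0 + c1*x + c2*x^2 + c3*x^3 + c4*x^4 + c5*x^5) 0 = 120*c5 := by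
  rw [show (5:ℕ) = 4+1 from rfl, iteratedDeriv_succ', quint_deriv, quint_it4]; ring

lemma iter_fst (γ : ℝ → ℝ × ℝ) (hγ : ContDiff ℝ (⊤:ℕ∞) γ) (k : ℕ) :
    iteratedDeriv k (fun s => (γ s).1) 0 = (iteratedDeriv k γ 0).1 := by
  have h := (ContinuousLinearMap.fst ℝ ℝ ℝ).iteratedFDeriv_comp_left (f := γ) (x := (0:ℝ)) hγ.contDiffAt
    (i := k) (by exact_mod_cast le_top)
  have hco : (fun s => (γ s).1) = (ContinuousLinearMap.fst ℝ ℝ ℝ) ∘ γ := rfl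
  rw [hco, iteratedDeriv_eq_iteratedFDeriv, h, iteratedDeriv_eq_iteratedFDeriv]
  rfl

lemma iter_snd (γ : ℝ → ℝ × ℝ) (hγ : ContDiff ℝ (⊤:ℕ∞) γ) (k : ℕ) :
    iteratedDeriv k (fun s => (γ s).2) 0 = (iteratedDeriv k γ 0).2 := by
  have h := (ContinuousLinearMap.snd ℝ ℝ ℝ).iteratedFDeriv_comp_left (f := γ) (x := (0:ℝ)) hγ.contDiffAt
    (i := k) (by exact_mod_cast le_top)
  have hco : (fun s => (γ s).2) = (ContinuousLinearMap.snd ℝ ℝ ℝ) ∘ γ := rfl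
  rw [hco, iteratedDeriv_eq_iteratedFDeriv, h, iteratedDeriv_eq_iteratedFDeriv]
  rfl

lemma peano (n : ℕ) (f g : ℝ → ℝ) (hf : ContDiff ℝ (⊤:ℕ∞) f) (hg : ContDiff ℝ (⊤:ℕ∞) g)
    (h : ∀ k, k ≤ n → iteratedDeriv k f 0 = iteratedDeriv k g 0) :
    Tendsto (fun s => (f s - g s) / s ^ n) (𝓝[≠] (0:ℝ)) (𝓝 0) := by
  induction n generalizing f g with
  | zero =>
    have h0 : f 0 - g 0 = 0 := sub_eq_zero_of_eq (by simpa using h 0 le_rfl)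
    have := ((hf.continuous.sub hg.continuous).tendsto 0).mono_left
      (nhdsWithin_le_nhds (s := {(0:ℝ)}ᶜ))
    simpa [h0, Pi.sub_def] using this
  | succ n ih =>
    have hdf : ContDiff ℝ (⊤:ℕ∞) (deriv f) := (contDiff_infty_iff_deriv.mp hf).2
    have hdg : ContDiff ℝ (⊤:ℕ∞) (deriv g) := (contDiff_infty_iff_deriv.mp hg).2
    have ihd := ih (deriv f) (deriv g) hdf hdg (fun k hk => by
      rw [← iteratedDeriv_succ', ← iteratedDeriv_succ']
      exact h (k+1) (by omega))
    have hdiv : Tendsto (fun x : ℝ => (deriv f x - deriv g x) / (((n:ℝ)+1) * x ^ n))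
        (𝓝[≠] (0:ℝ)) (𝓝 0) := by
      have h2 := ihd.div_const ((n:ℝ)+1)
      rw [zero_div] at h2
      refine h2.congr fun x => ?_
      rw [div_div, mul_comm]
    refine HasDerivAt.lhopital_zero_nhdsNE (f := fun s => f s - g s) (g := fun s : ℝ => s^(n+1))
      (f' := fun x => deriv f x - deriv g x) (g' := fun x : ℝ => ((n:ℝ)+1) * x ^ n)
      ?_ ?_ ?_ ?_ ?_ hdiv
    · exact Eventually.of_forall fun x =>
        ((hf.differentiable (by simp) x).hasDerivAt).sub
          ((hg.differentiable (by simp) x).hasDerivAt)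
    · exact Eventually.of_forall fun x => by simpa using hasDerivAt_pow (n+1) x
    · filter_upwards [self_mem_nhdsWithin] with x hx
      simp only [Set.mem_compl_iff, Set.mem_singleton_iff] at hx
      exact mul_ne_zero (by positivity) (pow_ne_zero _ hx)
    · have h0 : f 0 - g 0 = 0 := sub_eq_zero_of_eq (by simpa using h 0 (by omega))
      have := ((hf.continuous.sub hg.continuous).tendsto 0).mono_left
        (nhdsWithin_le_nhds (s := {(0:ℝ)}ᶜ))
      simpa [h0, Pi.sub_def] using this
    · have := ((continuous_pow (n+1)).tendsto (0:ℝ)).mono_left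
        (nhdsWithin_le_nhds (s := {(0:ℝ)}ᶜ))
      simpa using this



set_option maxHeartbeats 1000000 in
/-- Normal form of a positive 3/2-cusp: up to an orientation preserving equi-affine
transformation and parameter change, `γ` agrees with
`u ↦ (u², u³ + μ_A·u⁵/(80·⁵√54))` to order higher than `u⁵`. -/
theorem stmt_5 (γ : ℝ → ℝ × ℝ) (hγ : ContDiff ℝ (⊤:ℕ∞) γ)
    (h1 : deriv γ 0 = 0)
    (h2 : 0 < det2 (iteratedDeriv 2 γ 0) (iteratedDeriv 3 γ 0)) :
    ∃ (a b c d : ℝ) (v : ℝ × ℝ), a * d - b * c = 1 ∧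
      ∃ ε > (0:ℝ), ∃ t : ℝ → ℝ,
        ContDiffOn ℝ (⊤:ℕ∞) t (Set.Ioo (-ε) ε) ∧ t 0 = 0 ∧ 0 < deriv t 0 ∧
        Tendsto (fun u => (u ^ 5)⁻¹ •
            (applyAff a b c d v (γ (t u))
              - (u ^ 2, u ^ 3 + muA γ * u ^ 5 / (80 * (54:ℝ) ^ ((1:ℝ)/5)))))
          (𝓝[≠] (0:ℝ)) (𝓝 (0 : ℝ × ℝ)) := by
  obtain ⟨ee, he⟩ : ∃ z : ℝ × ℝ, z = iteratedDeriv 2 γ 0 := ⟨_, rfl⟩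
  obtain ⟨ff, hf⟩ : ∃ z : ℝ × ℝ, z = iteratedDeriv 3 γ 0 := ⟨_, rfl⟩
  obtain ⟨mm, hm⟩ : ∃ z : ℝ × ℝ, z = iteratedDeriv 4 γ 0 := ⟨_, rfl⟩
  obtain ⟨nn, hn⟩ : ∃ z : ℝ × ℝ, z = iteratedDeriv 5 γ 0 := ⟨_, rfl⟩
  obtain ⟨g0, hg0⟩ : ∃ z : ℝ × ℝ, z = γ 0 := ⟨_, rfl⟩
  obtain ⟨D, hDdef⟩ : ∃ z : ℝ, z = det2 ee ff := ⟨_, rfl⟩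
  have hD : 0 < D := by rw [hDdef, he, hf]; exact h2
  have hDne : D ≠ 0 := ne_of_gt hD
  have hDexp : D = ee.1 * ff.2 - ee.2 * ff.1 := hDdef
  have hD0 : ee.1 * ff.2 - ee.2 * ff.1 ≠ 0 := by rw [← hDexp]; exact hDne
  obtain ⟨α, hαdef⟩ : ∃ z : ℝ, z = ((12/D) ^ ((1:ℝ)/5) : ℝ) := ⟨_, rfl⟩
  have hαpos : 0 < α := hαdef ▸ Real.rpow_pos_of_pos (by positivity) _
  have hαne : α ≠ 0 := ne_of_gt hαpos
  have hα5 : α ^ 5 = 12 / D := by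
    rw [hαdef, ← Real.rpow_natCast ((12/D) ^ ((1:ℝ)/5)) 5,
      ← Real.rpow_mul (by positivity : (0:ℝ) ≤ 12/D)]
    norm_num
  obtain ⟨κ, hκdef⟩ : ∃ z : ℝ, z = ((54:ℝ) ^ ((1:ℝ)/5) : ℝ) := ⟨_, rfl⟩
  have hκpos : 0 < κ := hκdef ▸ Real.rpow_pos_of_pos (by norm_num) _
  have hκne : κ ≠ 0 := ne_of_gt hκpos
  have hκ5 : κ ^ 5 = 54 := by
    rw [hκdef, ← Real.rpow_natCast ((54:ℝ) ^ ((1:ℝ)/5)) 5,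
      ← Real.rpow_mul (by norm_num : (0:ℝ) ≤ 54)]
    norm_num
  obtain ⟨x, hx⟩ : ∃ z : ℝ, z = det2 mm ff / D := ⟨_, rfl⟩
  obtain ⟨y, hy⟩ : ∃ z : ℝ, z = det2 ee mm / D := ⟨_, rfl⟩
  obtain ⟨x5, hx5⟩ : ∃ z : ℝ, z = det2 nn ff / D := ⟨_, rfl⟩
  obtain ⟨y5, hy5⟩ : ∃ z : ℝ, z = det2 ee nn / D := ⟨_, rfl⟩
  have hxD : x * D = mm.1 * ff.2 - mm.2 * ff.1 := by rw [hx]; field_simp [hDne]; rfl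
  have hyD : y * D = ee.1 * mm.2 - ee.2 * mm.1 := by rw [hy]; field_simp [hDne]; rfl
  have hx5D : x5 * D = nn.1 * ff.2 - nn.2 * ff.1 := by rw [hx5]; field_simp [hDne]; rfl
  have hy5D : y5 * D = ee.1 * nn.2 - ee.2 * nn.1 := by rw [hy5]; field_simp [hDne]; rfl
  obtain ⟨β, hβ⟩ : ∃ z : ℝ, z = -α^2*y/12 := ⟨_, rfl⟩
  obtain ⟨p, hp⟩ : ∃ z : ℝ, z = -(β^2 + α^4*x/12)/(2*α) := ⟨_, rfl⟩
  have hp2 : 2*α*p = -(β^2 + α^4*x/12) := by rw [hp]; field_simp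
  obtain ⟨μ, hμ⟩ : ∃ z : ℝ, z = α^2*(24*y5 - 60*x - 35*y^2)/480 := ⟨_, rfl⟩
  obtain ⟨q, hq⟩ : ∃ z : ℝ, z = (μ*α*β - β*p - α^3*β*x/6 - α^5*x5/120)/α := ⟨_, rfl⟩
  have hqα : q*α = μ*α*β - β*p - α^3*β*x/6 - α^5*x5/120 := by rw [hq]; field_simp
  obtain ⟨aa, haa⟩ : ∃ z : ℝ, z = 2*α*β*(ee.2/2) + α^3*(ff.2/6) := ⟨_, rfl⟩
  obtain ⟨bb, hbb⟩ : ∃ z : ℝ, z = -(2*α*β*(ee.1/2) + α^3*(ff.1/6)) := ⟨_, rfl⟩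
  obtain ⟨cc, hcc⟩ : ∃ z : ℝ, z = -(α^2*(ee.2/2)) := ⟨_, rfl⟩
  obtain ⟨dd, hdd⟩ : ∃ z : ℝ, z = α^2*(ee.1/2) := ⟨_, rfl⟩
  obtain ⟨v0, hv0⟩ : ∃ z : ℝ × ℝ, z = ((-(aa*g0.1 + bb*g0.2), -(cc*g0.1 + dd*g0.2)) : ℝ × ℝ) :=
    ⟨_, rfl⟩
  -- the algebraic identities
  have hI1 : aa*(α^2*(ee.1/2)) + bb*(α^2*(ee.2/2)) = 1 := by
    have h' : aa*(α^2*(ee.1/2)) + bb*(α^2*(ee.2/2)) = α^5 * D / 12 := by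
      rw [haa, hbb, hDexp]; ring
    rw [h', hα5]; field_simp
  have hI2 : aa*(2*α*β*(ee.1/2) + α^3*(ff.1/6)) + bb*(2*α*β*(ee.2/2) + α^3*(ff.2/6)) = 0 := by
    rw [haa, hbb]; ring
  have hI1' : cc*(α^2*(ee.1/2)) + dd*(α^2*(ee.2/2)) = 0 := by
    rw [hcc, hdd]; ring
  have hI2' : cc*(2*α*β*(ee.1/2) + α^3*(ff.1/6)) + dd*(2*α*β*(ee.2/2) + α^3*(ff.2/6)) = 1 := by
    have h' : cc*(2*α*β*(ee.1/2) + α^3*(ff.1/6)) + dd*(2*α*β*(ee.2/2) + α^3*(ff.2/6))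
        = α^5 * D / 12 := by
      rw [hcc, hdd, hDexp]; ring
    rw [h', hα5]; field_simp
  have hdet : aa*dd - bb*cc = 1 := by
    have h' : aa*dd - bb*cc = α^5 * D / 12 := by
      rw [haa, hbb, hcc, hdd, hDexp]; ring
    rw [h', hα5]; field_simp
  have hV41 : (β^2+2*α*p)*(ee.1/2) + 3*α^2*β*(ff.1/6) + α^4*(mm.1/24) = 0 := by
    have hβy : 12 * β = -α^2*y := by rw [hβ]; ring
    have goal' : (((β^2+2*α*p)*(ee.1/2) + 3*α^2*β*(ff.1/6) + α^4*(mm.1/24)) * (24 * D)) = 0 := by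
      linear_combination (12*D*ee.1) * hp2 + (-α^4*ee.1) * hxD + (α^2*D*ff.1) * hβy
        + (-α^4*ff.1) * hyD + (α^4*mm.1) * hDexp
    have h24D : (24:ℝ) * D ≠ 0 := by positivity
    exact (mul_eq_zero.mp goal').resolve_right h24D
  have hV42 : (β^2+2*α*p)*(ee.2/2) + 3*α^2*β*(ff.2/6) + α^4*(mm.2/24) = 0 := by
    have hβy : 12 * β = -α^2*y := by rw [hβ]; ring
    have goal' : (((β^2+2*α*p)*(ee.2/2) + 3*α^2*β*(ff.2/6) + α^4*(mm.2/24)) * (24 * D)) = 0 := by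
      linear_combination (12*D*ee.2) * hp2 + (-α^4*ee.2) * hxD + (α^2*D*ff.2) * hβy
        + (-α^4*ff.2) * hyD + (α^4*mm.2) * hDexp
    have h24D : (24:ℝ) * D ≠ 0 := by positivity
    exact (mul_eq_zero.mp goal').resolve_right h24D
  have hβy : 12*β = -α^2*y := by rw [hβ]; ring
  have h2880 : (2880:ℝ)*D^2 ≠ 0 := by positivity
  have hV51 : 2*(α*q+β*p)*(ee.1/2) + (3*α^2*p+3*α*β^2)*(ff.1/6) + 4*α^3*β*(mm.1/24)
      + α^5*(nn.1/120) = μ*(2*α*β*(ee.1/2) + α^3*(ff.1/6)) := by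
    have goal' : (2*(α*q+β*p)*(ee.1/2) + (3*α^2*p+3*α*β^2)*(ff.1/6) + 4*α^3*β*(mm.1/24)
        + α^5*(nn.1/120) - μ*(2*α*β*(ee.1/2) + α^3*(ff.1/6))) * (2880*D^2) = 0 := by
      linear_combination ((2880:ℝ)*D^2*ee.1) * hqα
        + ((720:ℝ)*α*D^2*ff.1) * hp2
        + ((60:ℝ)*α*β*D^2*ff.1 + (40:ℝ)*α^3*D^2*mm.1 + (-5:ℝ)*α^3*y*D^2*ff.1 + (-40:ℝ)*α^3*x*D^2*ee.1) * hβy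
        + ((-480:ℝ)*α^3*D^2*ff.1) * hμ
        + ((40:ℝ)*α^5*y*D*ee.1) * hxD
        + ((-40:ℝ)*α^5*ee.2*ff.1*mm.1 + (40:ℝ)*α^5*ee.1*ff.2*mm.1 + (-40:ℝ)*α^5*D*mm.1 + (40:ℝ)*α^5*y*D*ff.1) * hyD
        + ((-24:ℝ)*α^5*D*ee.1) * hx5D
        + ((-24:ℝ)*α^5*D*ff.1) * hy5D
        + ((40:ℝ)*α^5*ee.2*mm.1^2 + (-40:ℝ)*α^5*ee.1*mm.1*mm.2 + (24:ℝ)*α^5*D*nn.1) * hDexp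
    exact sub_eq_zero.mp ((mul_eq_zero.mp goal').resolve_right h2880)
  have hV52 : 2*(α*q+β*p)*(ee.2/2) + (3*α^2*p+3*α*β^2)*(ff.2/6) + 4*α^3*β*(mm.2/24)
      + α^5*(nn.2/120) = μ*(2*α*β*(ee.2/2) + α^3*(ff.2/6)) := by
    have goal' : (2*(α*q+β*p)*(ee.2/2) + (3*α^2*p+3*α*β^2)*(ff.2/6) + 4*α^3*β*(mm.2/24)
        + α^5*(nn.2/120) - μ*(2*α*β*(ee.2/2) + α^3*(ff.2/6))) * (2880*D^2) = 0 := by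
      linear_combination ((2880:ℝ)*D^2*ee.2) * hqα
        + ((720:ℝ)*α*D^2*ff.2) * hp2
        + ((60:ℝ)*α*β*D^2*ff.2 + (40:ℝ)*α^3*D^2*mm.2 + (-5:ℝ)*α^3*y*D^2*ff.2 + (-40:ℝ)*α^3*x*D^2*ee.2) * hβy
        + ((-480:ℝ)*α^3*D^2*ff.2) * hμ
        + ((40:ℝ)*α^5*y*D*ee.2) * hxD
        + ((-40:ℝ)*α^5*ee.2*ff.1*mm.2 + (40:ℝ)*α^5*ee.1*ff.2*mm.2 + (-40:ℝ)*α^5*D*mm.2 + (40:ℝ)*α^5*y*D*ff.2) * hyD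
        + ((-24:ℝ)*α^5*D*ee.2) * hx5D
        + ((-24:ℝ)*α^5*D*ff.2) * hy5D
        + ((40:ℝ)*α^5*ee.2*mm.1*mm.2 + (-40:ℝ)*α^5*ee.1*mm.2^2 + (24:ℝ)*α^5*D*nn.2) * hDexp
    exact sub_eq_zero.mp ((mul_eq_zero.mp goal').resolve_right h2880)
  -- the value μ versus muA
  have hCform : muA γ = (24*y5 - 60*x - 35*y^2) * (D^2 / D ^ ((12:ℝ)/5)) := by
    unfold muA
    rw [← he, ← hf, ← hm, ← hn, ← hDdef, abs_of_pos hD]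
    have hsw : det2 ff mm = -(det2 mm ff) := by simp only [det2]; ring
    rw [hsw, hx, hy, hy5]
    have hpow : (0:ℝ) < D ^ ((12:ℝ)/5) := Real.rpow_pos_of_pos hD _
    field_simp
    ring
  have hstep : (D ^ (-(2:ℝ)/5)) ^ 5 = (α^2*κ/6)^5 := by
    rw [← Real.rpow_natCast (D ^ (-(2:ℝ)/5)) 5, ← Real.rpow_mul hD.le]
    have hexp : (-(2:ℝ)/5) * ((5:ℕ):ℝ) = -2 := by push_cast; ring
    rw [hexp]
    have hL : D ^ (-2:ℝ) = (D^2)⁻¹ := by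
      rw [show (-2:ℝ) = -((2:ℕ):ℝ) by push_cast; ring, Real.rpow_neg hD.le, Real.rpow_natCast]
    rw [hL]
    have hR : (α^2*κ/6)^5 = (α^5)^2 * κ^5 / 7776 := by ring
    rw [hR, hα5, hκ5]
    field_simp
    ring
  have hD25 : D ^ (-(2:ℝ)/5) = α^2*κ/6 :=
    (pow_left_inj₀ (Real.rpow_pos_of_pos hD _).le (by positivity) (by norm_num)).mp hstep
  have hDpow : D^2 / D ^ ((12:ℝ)/5) = α^2*κ/6 := by
    rw [← hD25, show (D:ℝ)^2 = D ^ (((2:ℕ)):ℝ) from (Real.rpow_natCast D 2).symm,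
      ← Real.rpow_sub hD]
    norm_num
  have hmuA : muA γ = 80 * κ * μ := by
    rw [hCform, hDpow, hμ]; field_simp; ring
  -- the functions
  obtain ⟨tf, htf⟩ : ∃ z : ℝ → ℝ, z = (fun u => 0 + α*u + β*u^2 + p*u^3 + q*u^4 + 0*u^5) :=
    ⟨_, rfl⟩
  obtain ⟨P1, hP1⟩ : ∃ z : ℝ → ℝ,
      z = (fun s => g0.1 + 0*s + ee.1/2*s^2 + ff.1/6*s^3 + mm.1/24*s^4 + nn.1/120*s^5) :=
    ⟨_, rfl⟩
  obtain ⟨P2, hP2⟩ : ∃ z : ℝ → ℝ,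
      z = (fun s => g0.2 + 0*s + ee.2/2*s^2 + ff.2/6*s^3 + mm.2/24*s^4 + nn.2/120*s^5) :=
    ⟨_, rfl⟩
  obtain ⟨R1, hR1⟩ : ∃ z : ℝ → ℝ, z = (fun u => s2 α β p q u * (ee.1/2) + s3 α β p q u * (ff.1/6)
    + s4 α β p q u * (mm.1/24) + s5 α β p q u * (nn.1/120)) := ⟨_, rfl⟩
  obtain ⟨R2, hR2⟩ : ∃ z : ℝ → ℝ, z = (fun u => s2 α β p q u * (ee.2/2) + s3 α β p q u * (ff.2/6)
    + s4 α β p q u * (mm.2/24) + s5 α β p q u * (nn.2/120)) := ⟨_, rfl⟩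
  obtain ⟨Bf, hBf⟩ : ∃ z : ℝ → ℝ, z = (fun u => α + β*u + p*u^2 + q*u^3) := ⟨_, rfl⟩
  have htB : ∀ u, tf u = u * Bf u := fun u => by rw [htf, hBf]; ring
  -- Taylor expansions of P1, P2 along tf
  have hq1 : ∀ u : ℝ, P1 (tf u) = g0.1 + (u^2*(α^2*(ee.1/2))
      + u^3*(2*α*β*(ee.1/2) + α^3*(ff.1/6))
      + u^4*((β^2+2*α*p)*(ee.1/2) + 3*α^2*β*(ff.1/6) + α^4*(mm.1/24))
      + u^5*(2*(α*q+β*p)*(ee.1/2) + (3*α^2*p+3*α*β^2)*(ff.1/6) + 4*α^3*β*(mm.1/24)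
          + α^5*(nn.1/120))
      + u^6*(R1 u)) := by
    intro u
    simp only [hP1, hR1, htf]
    linear_combination master5 α β p q (ee.1/2) (ff.1/6) (mm.1/24) (nn.1/120) u
  have hq2 : ∀ u : ℝ, P2 (tf u) = g0.2 + (u^2*(α^2*(ee.2/2))
      + u^3*(2*α*β*(ee.2/2) + α^3*(ff.2/6))
      + u^4*((β^2+2*α*p)*(ee.2/2) + 3*α^2*β*(ff.2/6) + α^4*(mm.2/24))
      + u^5*(2*(α*q+β*p)*(ee.2/2) + (3*α^2*p+3*α*β^2)*(ff.2/6) + 4*α^3*β*(mm.2/24)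
          + α^5*(nn.2/120))
      + u^6*(R2 u)) := by
    intro u
    simp only [hP2, hR2, htf]
    linear_combination master5 α β p q (ee.2/2) (ff.2/6) (mm.2/24) (nn.2/120) u
  -- smoothness facts
  have hγ1 : ContDiff ℝ (⊤:ℕ∞) (fun s => (γ s).1) :=
    ((ContinuousLinearMap.fst ℝ ℝ ℝ).contDiff).comp hγ
  have hγ2 : ContDiff ℝ (⊤:ℕ∞) (fun s => (γ s).2) :=
    ((ContinuousLinearMap.snd ℝ ℝ ℝ).contDiff).comp hγ
  have hP1c : ContDiff ℝ (⊤:ℕ∞) P1 := by rw [hP1]; exact quint_contDiff _ _ _ _ _ _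
  have hP2c : ContDiff ℝ (⊤:ℕ∞) P2 := by rw [hP2]; exact quint_contDiff _ _ _ _ _ _
  -- the Peano remainders
  have hder1 : ∀ k, k ≤ 5 → iteratedDeriv k (fun s => (γ s).1) 0 = iteratedDeriv k P1 0 := by
    intro k hk
    interval_cases k
    · rw [iteratedDeriv_zero, iteratedDeriv_zero, hP1, hg0]; norm_num
    · rw [iter_fst γ hγ 1, iteratedDeriv_one, h1, hP1, quint_it1]; simp
    · rw [iter_fst γ hγ 2, ← he, hP1, quint_it2]; ring
    · rw [iter_fst γ hγ 3, ← hf, hP1, quint_it3]; ring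
    · rw [iter_fst γ hγ 4, ← hm, hP1, quint_it4]; ring
    · rw [iter_fst γ hγ 5, ← hn, hP1, quint_it5]; ring
  have hder2 : ∀ k, k ≤ 5 → iteratedDeriv k (fun s => (γ s).2) 0 = iteratedDeriv k P2 0 := by
    intro k hk
    interval_cases k
    · rw [iteratedDeriv_zero, iteratedDeriv_zero, hP2, hg0]; norm_num
    · rw [iter_snd γ hγ 1, iteratedDeriv_one, h1, hP2, quint_it1]; simp
    · rw [iter_snd γ hγ 2, ← he, hP2, quint_it2]; ring
    · rw [iter_snd γ hγ 3, ← hf, hP2, quint_it3]; ring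
    · rw [iter_snd γ hγ 4, ← hm, hP2, quint_it4]; ring
    · rw [iter_snd γ hγ 5, ← hn, hP2, quint_it5]; ring
  have hE1lim : Tendsto (fun s => ((γ s).1 - P1 s) / s ^ 5) (𝓝[≠] (0:ℝ)) (𝓝 0) :=
    peano 5 _ _ hγ1 hP1c hder1
  have hE2lim : Tendsto (fun s => ((γ s).2 - P2 s) / s ^ 5) (𝓝[≠] (0:ℝ)) (𝓝 0) :=
    peano 5 _ _ hγ2 hP2c hder2
  -- the parameter change tends to 0 within the punctured neighbourhood
  have hBcont : Continuous Bf := by rw [hBf]; fun_prop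
  have hB0 : Bf 0 = α := by rw [hBf]; norm_num
  have hBne : ∀ᶠ u in 𝓝 (0:ℝ), Bf u ≠ 0 :=
    hBcont.continuousAt.eventually_ne (by rw [hB0]; exact hαne)
  have htfcont : Continuous tf := by rw [htf]; fun_prop
  have htf0 : tf 0 = 0 := by rw [htf]; norm_num
  have htlim : Tendsto tf (𝓝[≠] (0:ℝ)) (𝓝[≠] (0:ℝ)) := by
    rw [tendsto_nhdsWithin_iff]
    constructor
    · have := (htfcont.tendsto 0).mono_left (nhdsWithin_le_nhds (s := {(0:ℝ)}ᶜ))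
      rwa [htf0] at this
    · filter_upwards [eventually_nhdsWithin_of_eventually_nhds hBne, self_mem_nhdsWithin]
        with u hB hu
      simp only [Set.mem_compl_iff, Set.mem_singleton_iff] at hu ⊢
      rw [htB u]
      exact mul_ne_zero hu hB
  have hB5 : Tendsto (fun u => (Bf u)^5) (𝓝[≠] (0:ℝ)) (𝓝 (α^5)) := by
    have h5 := ((hBcont.pow 5).tendsto 0).mono_left (nhdsWithin_le_nhds (s := {(0:ℝ)}ᶜ))
    simp only [Pi.pow_apply, hB0] at h5
    exact h5
  have hE1u : Tendsto (fun u => ((γ (tf u)).1 - P1 (tf u)) / u ^ 5) (𝓝[≠] (0:ℝ)) (𝓝 0) := by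
    have hmul := (hE1lim.comp htlim).mul hB5
    rw [zero_mul] at hmul
    refine hmul.congr' ?_
    filter_upwards [eventually_nhdsWithin_of_eventually_nhds hBne, self_mem_nhdsWithin]
      with u hB hu
    simp only [Set.mem_compl_iff, Set.mem_singleton_iff] at hu
    simp only [Function.comp]
    rw [htB u]
    field_simp
  have hE2u : Tendsto (fun u => ((γ (tf u)).2 - P2 (tf u)) / u ^ 5) (𝓝[≠] (0:ℝ)) (𝓝 0) := by
    have hmul := (hE2lim.comp htlim).mul hB5
    rw [zero_mul] at hmul
    refine hmul.congr' ?_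
    filter_upwards [eventually_nhdsWithin_of_eventually_nhds hBne, self_mem_nhdsWithin]
      with u hB hu
    simp only [Set.mem_compl_iff, Set.mem_singleton_iff] at hu
    simp only [Function.comp]
    rw [htB u]
    field_simp
  -- polynomial tails tend to zero
  have hR1cont : Continuous R1 := by rw [hR1]; unfold s2 s3 s4 s5; fun_prop
  have hR2cont : Continuous R2 := by rw [hR2]; unfold s2 s3 s4 s5; fun_prop
  have hu1 : Tendsto (fun u => u * (aa * R1 u + bb * R2 u)) (𝓝[≠] (0:ℝ)) (𝓝 0) := by
    have hc : Continuous (fun u => u * (aa * R1 u + bb * R2 u)) :=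
      continuous_id.mul ((continuous_const.mul hR1cont).add (continuous_const.mul hR2cont))
    have := (hc.tendsto 0).mono_left (nhdsWithin_le_nhds (s := {(0:ℝ)}ᶜ))
    simpa using this
  have hu2 : Tendsto (fun u => u * (cc * R1 u + dd * R2 u)) (𝓝[≠] (0:ℝ)) (𝓝 0) := by
    have hc : Continuous (fun u => u * (cc * R1 u + dd * R2 u)) :=
      continuous_id.mul ((continuous_const.mul hR1cont).add (continuous_const.mul hR2cont))
    have := (hc.tendsto 0).mono_left (nhdsWithin_le_nhds (s := {(0:ℝ)}ᶜ))
    simpa using this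
  have hlim1 : Tendsto (fun u => aa*(((γ (tf u)).1 - P1 (tf u))/u^5)
      + bb*(((γ (tf u)).2 - P2 (tf u))/u^5) + u*(aa*R1 u + bb*R2 u)) (𝓝[≠] (0:ℝ)) (𝓝 0) := by
    have := ((hE1u.const_mul aa).add (hE2u.const_mul bb)).add hu1
    simpa using this
  have hlim2 : Tendsto (fun u => cc*(((γ (tf u)).1 - P1 (tf u))/u^5)
      + dd*(((γ (tf u)).2 - P2 (tf u))/u^5) + u*(cc*R1 u + dd*R2 u)) (𝓝[≠] (0:ℝ)) (𝓝 0) := by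
    have := ((hE1u.const_mul cc).add (hE2u.const_mul dd)).add hu2
    simpa using this
  have hpair : Tendsto (fun u => ((aa*(((γ (tf u)).1 - P1 (tf u))/u^5)
      + bb*(((γ (tf u)).2 - P2 (tf u))/u^5) + u*(aa*R1 u + bb*R2 u),
      cc*(((γ (tf u)).1 - P1 (tf u))/u^5)
      + dd*(((γ (tf u)).2 - P2 (tf u))/u^5) + u*(cc*R1 u + dd*R2 u)) : ℝ × ℝ))
      (𝓝[≠] (0:ℝ)) (𝓝 (0 : ℝ × ℝ)) := by
    have hprod := hlim1.prodMk_nhds hlim2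
    have h00 : ((0:ℝ), (0:ℝ)) = (0 : ℝ × ℝ) := rfl
    rwa [h00] at hprod
  have htarget : ∀ u : ℝ, muA γ * u ^ 5 / (80 * (54:ℝ) ^ ((1:ℝ)/5)) = μ * u ^ 5 := by
    intro u
    rw [← hκdef, hmuA]
    field_simp
  -- assemble
  refine ⟨aa, bb, cc, dd, v0, hdet, 1, one_pos, tf, ?_, htf0, ?_, ?_⟩
  · rw [htf]; exact (quint_contDiff _ _ _ _ _ _).contDiffOn
  · rw [htf, quint_deriv]
    norm_num
    exact hαpos
  · refine hpair.congr' ?_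
    filter_upwards [self_mem_nhdsWithin] with u hu
    simp only [Set.mem_compl_iff, Set.mem_singleton_iff] at hu
    have hu5 : (u:ℝ)^5 ≠ 0 := pow_ne_zero _ hu
    have e1 := hq1 u
    have e2 := hq2 u
    have key1 : aa * (γ (tf u)).1 + bb * (γ (tf u)).2 + v0.1 - u ^ 2
        = aa*((γ (tf u)).1 - P1 (tf u)) + bb*((γ (tf u)).2 - P2 (tf u))
          + u^6*(aa*R1 u + bb*R2 u) := by
      rw [hv0]
      linear_combination aa*e1 + bb*e2 + u^2*hI1 + u^3*hI2 + u^4*(aa*hV41 + bb*hV42)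
        + u^5*(aa*hV51 + bb*hV52) + u^5*μ*hI2
    have key2 : cc * (γ (tf u)).1 + dd * (γ (tf u)).2 + v0.2 - (u ^ 3 + μ * u ^ 5)
        = cc*((γ (tf u)).1 - P1 (tf u)) + dd*((γ (tf u)).2 - P2 (tf u))
          + u^6*(cc*R1 u + dd*R2 u) := by
      rw [hv0]
      linear_combination cc*e1 + dd*e2 + u^2*hI1' + u^3*hI2' + u^4*(cc*hV41 + dd*hV42)
        + u^5*(cc*hV51 + dd*hV52) + u^5*μ*hI2'
    refine Prod.ext ?_ ?_
    · simp only [applyAff, Prod.smul_fst, Prod.fst_sub, smul_eq_mul]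
      rw [show aa * (γ (tf u)).1 + bb * (γ (tf u)).2 + v0.1 - u ^ 2
          = aa*((γ (tf u)).1 - P1 (tf u)) + bb*((γ (tf u)).2 - P2 (tf u))
            + u^6*(aa*R1 u + bb*R2 u) from key1]
      field_simp
    · simp only [applyAff, Prod.smul_snd, Prod.snd_sub, smul_eq_mul]
      rw [htarget u, show cc * (γ (tf u)).1 + dd * (γ (tf u)).2 + v0.2 - (u ^ 3 + μ * u ^ 5)
          = cc*((γ (tf u)).1 - P1 (tf u)) + dd*((γ (tf u)).2 - P2 (tf u))
            + u^6*(cc*R1 u + dd*R2 u) from key2]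
      field_simp
end
end

section
/- Let γ : ℝ → ℝ² be a C^∞ curve with a 3/2-cusp at t = 0. Then the function τ(t) := sgn(t)·|s_A(t)|^{3/5} extends to a C^∞ function on a neighborhood of 0 with τ(0) = 0 and τ'(0) > 0; in particular τ can be taken as a local coordinate of γ at t = 0 (the 3/5-arclength parameter). -/
noncomputable section
open Real Set Filter Topology

open scoped ContDiff
open intervalIntegral MeasureTheory

-- parametric integral: J w H x = ∫ s in 0..1, w s * H (x * s)
def J (w H : ℝ → ℝ) (x : ℝ) : ℝ := ∫ s in (0:ℝ)..1, w s * H (x * s)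

lemma hasDerivAt_J (w H : ℝ → ℝ) (hw : Continuous w) (hH : ContDiff ℝ ∞ H) (x : ℝ) :
    HasDerivAt (J w H) (J (fun s => w s * s) (deriv H) x) x := by
  have hH' : Continuous (deriv H) := hH.continuous_deriv (by norm_num)
  -- uniform bound on compact set
  obtain ⟨C, hC⟩ : ∃ C, ∀ p ∈ (Metric.closedBall x 1 ×ˢ uIcc (0:ℝ) 1),
      ‖w p.2 * p.2 * deriv H (p.1 * p.2)‖ ≤ C := by
    exact ((isCompact_closedBall x 1).prod isCompact_uIcc).exists_bound_of_continuousOn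
      (((hw.comp continuous_snd).mul continuous_snd).mul
        (hH'.comp (continuous_fst.mul continuous_snd))).continuousOn
  have key := intervalIntegral.hasDerivAt_integral_of_dominated_loc_of_deriv_le
    (F := fun y s => w s * H (y * s)) (F' := fun y s => w s * s * deriv H (y * s))
    (a := 0) (b := 1) (μ := MeasureTheory.volume) (x₀ := x) (bound := fun _ => C)
    (s := Metric.ball x 1) (Metric.ball_mem_nhds x one_pos)
    (Filter.Eventually.of_forall fun y =>
      ((hw.mul (hH.continuous.comp (continuous_const.mul continuous_id))).aestronglyMeasurable).restrict)
    ((hw.mul (hH.continuous.comp (continuous_const.mul continuous_id))).intervalIntegrable 0 1)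
    (((hw.mul continuous_id).mul (hH'.comp (continuous_const.mul continuous_id))).aestronglyMeasurable).restrict
    (Filter.Eventually.of_forall fun s hs y hy => by
      exact hC (y, s) ⟨Metric.ball_subset_closedBall hy, uIoc_subset_uIcc hs⟩)
    (intervalIntegrable_const)
    (Filter.Eventually.of_forall fun s _ y _ => by
      have h1 : HasDerivAt (fun y : ℝ => y * s) s y := by
        simpa using (hasDerivAt_id y).mul_const s
      have h2 : HasDerivAt (fun y : ℝ => H (y * s)) (deriv H (y * s) * s) y :=
        (((hH.differentiable (by simp)) (y * s)).hasDerivAt).comp y h1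
      have h3 := h2.const_mul (w s)
      convert h3 using 1 <;> first | rfl | ring
      )
  exact key.2

lemma contDiff_J : ∀ (n : ℕ) (w H : ℝ → ℝ), Continuous w → ContDiff ℝ ∞ H →
    ContDiff ℝ n (J w H)
  | 0, w, H, hw, hH => contDiff_zero.mpr <|
      continuous_iff_continuousAt.mpr fun x => (hasDerivAt_J w H hw hH x).continuousAt
  | (n+1), w, H, hw, hH => by
      have hd : Differentiable ℝ (J w H) := fun x => (hasDerivAt_J w H hw hH x).differentiableAt
      have hcast : ((n + 1 : ℕ) : WithTop ℕ∞) = (n : WithTop ℕ∞) + 1 := by push_cast; ring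
      rw [hcast]
      refine contDiff_succ_iff_deriv.mpr ⟨hd, by simp, ?_⟩
      have hde : deriv (J w H) = J (fun s => w s * s) (deriv H) :=
        funext fun x => (hasDerivAt_J w H hw hH x).deriv
      rw [hde]
      exact contDiff_J n _ _ (hw.mul continuous_id) (contDiff_infty_iff_deriv.mp hH).2

lemma contDiff_J_top (w H : ℝ → ℝ) (hw : Continuous w) (hH : ContDiff ℝ ∞ H) :
    ContDiff ℝ ∞ (J w H) :=
  contDiff_infty.mpr fun n => contDiff_J n w H hw hH

lemma J_one_eq (g : ℝ → ℝ) (hg : ContDiff ℝ ∞ g) (u : ℝ) :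
    u * J (fun _ => 1) (deriv g) u = g u - g 0 := by
  rcases eq_or_ne u 0 with rfl | hu
  · simp
  · have h1 : J (fun _ => 1) (deriv g) u = ∫ s in (0:ℝ)..1, deriv g (u * s) := by
      simp [J]
    have h2 := intervalIntegral.integral_comp_mul_left (a := (0:ℝ)) (b := 1)
      (f := deriv g) (c := u) hu
    have h3 : (∫ y in (0:ℝ)..u, deriv g y) = g u - g 0 :=
      intervalIntegral.integral_deriv_eq_sub
        (fun y _ => (hg.differentiable (by simp)).differentiableAt)
        ((hg.continuous_deriv (by simp)).intervalIntegrable 0 u)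
    rw [h1, h2]
    simp only [mul_zero, mul_one, h3, smul_eq_mul]
    field_simp

lemma J_val_zero (w H : ℝ → ℝ) : J w H 0 = ∫ s in (0:ℝ)..1, w s * H 0 := by
  simp [J]

lemma smooth_iter (f : ℝ → ℝ) (hf : ContDiff ℝ ∞ f) (n : ℕ) :
    ContDiff ℝ ∞ (iteratedDeriv n f) := by
  rw [iteratedDeriv_eq_iterate]; exact hf.iterate_deriv n

lemma iter_hasDeriv (f : ℝ → ℝ) (hf : ContDiff ℝ ∞ f) (n : ℕ) (u : ℝ) :
    HasDerivAt (iteratedDeriv n f) (iteratedDeriv (n+1) f u) u := by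
  rw [iteratedDeriv_succ]
  exact ((smooth_iter f hf n).differentiable (by simp) u).hasDerivAt

lemma iteratedDeriv_pair (γ : ℝ → ℝ × ℝ) (hγ : ContDiff ℝ ∞ γ) (n : ℕ) :
    iteratedDeriv n γ = fun u =>
      (iteratedDeriv n (fun v => (γ v).1) u, iteratedDeriv n (fun v => (γ v).2) u) := by
  induction n with
  | zero => simp [iteratedDeriv_zero]
  | succ n ih =>
    funext u
    rw [iteratedDeriv_succ, ih]
    have h1 := iter_hasDeriv _ hγ.fst n u
    have h2 := iter_hasDeriv _ hγ.snd n u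
    exact (h1.prodMk h2).deriv

lemma sign_mul_abs' (t : ℝ) : Real.sign t * |t| = t := by
  rcases lt_trichotomy t 0 with h | rfl | h
  · rw [Real.sign_of_neg h, abs_of_neg h]; ring
  · simp
  · rw [Real.sign_of_pos h, abs_of_pos h]; ring


/-- At a 3/2-cusp, `τ(t) = sgn(t)·|s_A(t)|^{3/5}` extends to a `C^∞` function near `0`
with `τ(0) = 0` and `τ'(0) > 0`, so it is a local coordinate (3/5-arclength parameter). -/
theorem stmt_6 (γ : ℝ → ℝ × ℝ) (hγ : ContDiff ℝ (⊤:ℕ∞) γ) (hcusp : HasCusp γ) :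
    ∃ ε > (0:ℝ), ∃ τ : ℝ → ℝ, ContDiffOn ℝ (⊤:ℕ∞) τ (Set.Ioo (-ε) ε) ∧
      (∀ t ∈ Set.Ioo (-ε) ε, τ t = Real.sign t * |sA γ t| ^ ((3:ℝ)/5)) ∧
      τ 0 = 0 ∧ 0 < deriv τ 0 := by
  obtain ⟨hc1, hc2⟩ := hcusp
  have hone : (1:WithTop ℕ∞) ≤ ∞ := by norm_num
  set X : ℕ → ℝ → ℝ := fun n => iteratedDeriv n (fun v => (γ v).1) with hX
  set Y : ℕ → ℝ → ℝ := fun n => iteratedDeriv n (fun v => (γ v).2) with hY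
  have hXs : ∀ n, ContDiff ℝ ∞ (X n) := fun n => smooth_iter _ hγ.fst n
  have hYs : ∀ n, ContDiff ℝ ∞ (Y n) := fun n => smooth_iter _ hγ.snd n
  have hXd : ∀ n u, HasDerivAt (X n) (X (n+1) u) u := fun n u => iter_hasDeriv _ hγ.fst n u
  have hYd : ∀ n u, HasDerivAt (Y n) (Y (n+1) u) u := fun n u => iter_hasDeriv _ hγ.snd n u
  have hpair : ∀ n u, iteratedDeriv n γ u = (X n u, Y n u) := fun n u => by
    rw [iteratedDeriv_pair γ hγ n]
  have hder : ∀ u, deriv γ u = (X 1 u, Y 1 u) := fun u => by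
    rw [← iteratedDeriv_one, hpair]
  set D : ℝ → ℝ := fun u => det2 (deriv γ u) (iteratedDeriv 2 γ u) with hD
  have hDeq : D = fun u => X 1 u * Y 2 u - Y 1 u * X 2 u := by
    funext u
    show det2 (deriv γ u) (iteratedDeriv 2 γ u) = _
    rw [hder u, hpair 2 u]
    rfl
  have hDs : ContDiff ℝ ∞ D := by
    rw [hDeq]; exact ((hXs 1).mul (hYs 2)).sub ((hYs 1).mul (hXs 2))
  have hX10 : X 1 0 = 0 := by
    have := hder 0; rw [hc1] at this
    exact (congrArg Prod.fst this.symm : _)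
  have hY10 : Y 1 0 = 0 := by
    have := hder 0; rw [hc1] at this
    exact (congrArg Prod.snd this.symm : _)
  have hD0 : D 0 = 0 := by rw [hDeq]; simp [hX10, hY10]
  have hD'eq : deriv D = fun u => X 1 u * Y 3 u - Y 1 u * X 3 u := by
    funext u
    have h := ((hXd 1 u).mul (hYd 2 u)).sub ((hYd 1 u).mul (hXd 2 u))
    have h2 : HasDerivAt D (X 1 u * Y 3 u - Y 1 u * X 3 u) u := by
      rw [hDeq]; convert h using 1 <;> first | rfl | ring
    exact h2.deriv
  have hD'0 : deriv D 0 = 0 := by rw [hD'eq]; simp [hX10, hY10]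
  have hD''0 : deriv (deriv D) 0 = det2 (iteratedDeriv 2 γ 0) (iteratedDeriv 3 γ 0) := by
    have h := ((hXd 1 0).mul (hYd 3 0)).sub ((hYd 1 0).mul (hXd 3 0))
    have h2 : HasDerivAt (deriv D)
        (X 2 0 * Y 3 0 + X 1 0 * Y 4 0 - (Y 2 0 * X 3 0 + Y 1 0 * X 4 0)) 0 := by
      rw [hD'eq]; exact h
    rw [h2.deriv, hpair 2 0, hpair 3 0, hX10, hY10]
    show X 2 0 * Y 3 0 + 0 * Y 4 0 - (Y 2 0 * X 3 0 + 0 * X 4 0)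
      = X 2 0 * Y 3 0 - Y 2 0 * X 3 0
    ring
  set c := det2 (iteratedDeriv 2 γ 0) (iteratedDeriv 3 γ 0) with hcdef
  set D₁ : ℝ → ℝ := J (fun _ => 1) (deriv D) with hD₁
  have hD₁s : ContDiff ℝ ∞ D₁ :=
    contDiff_J_top _ _ continuous_const (contDiff_infty_iff_deriv.mp hDs).2
  have hfac1 : ∀ u, D u = u * D₁ u := fun u => by
    have h := J_one_eq D hDs u
    rw [hD0, sub_zero] at h
    exact h.symm
  have hD₁0 : D₁ 0 = 0 := by
    rw [hD₁, J_val_zero]; simp [hD'0]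
  set q : ℝ → ℝ := J (fun _ => 1) (deriv D₁) with hq
  have hqs : ContDiff ℝ ∞ q :=
    contDiff_J_top _ _ continuous_const (contDiff_infty_iff_deriv.mp hD₁s).2
  have hfac2 : ∀ u, D₁ u = u * q u := fun u => by
    have h := J_one_eq D₁ hD₁s u
    rw [hD₁0, sub_zero] at h
    exact h.symm
  have hfacD : ∀ u, D u = u ^ 2 * q u := fun u => by
    rw [hfac1, hfac2]; ring
  have hderD₁ : deriv D₁ = J (fun s => 1 * s) (deriv (deriv D)) := by
    funext x
    exact (hasDerivAt_J (fun _ => 1) (deriv D) continuous_const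
      (contDiff_infty_iff_deriv.mp hDs).2 x).deriv
  have hq0 : q 0 = c / 2 := by
    have h1 : q 0 = deriv D₁ 0 := by rw [hq, J_val_zero]; simp
    have h2 : deriv D₁ 0 = ∫ s in (0:ℝ)..1, (1 * s) * deriv (deriv D) 0 := by
      rw [hderD₁, J_val_zero]
    rw [h1, h2, hD''0]
    simp only [one_mul]
    rw [intervalIntegral.integral_mul_const, integral_id]
    ring
  have hq0ne : q 0 ≠ 0 := by rw [hq0]; exact div_ne_zero hc2 two_ne_zero
  obtain ⟨δ, hδpos, hδ⟩ : ∃ δ > 0, ∀ u : ℝ, |u| < δ → |q u - q 0| < |q 0| / 2 := by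
    obtain ⟨δ, hδpos, h⟩ := Metric.continuousAt_iff.mp (hqs.continuous.continuousAt (x := 0))
      (|q 0| / 2) (half_pos (abs_pos.mpr hq0ne))
    exact ⟨δ, hδpos, fun u hu => by
      have := h (x := u) (by simpa [Real.dist_eq] using hu)
      simpa [Real.dist_eq] using this⟩
  set χb : ContDiffBump (0:ℝ) := ⟨δ/2, δ, by positivity, by linarith⟩ with hχ
  set qt : ℝ → ℝ := fun u => χb u * (q u - q 0) + q 0 with hqt
  have hqts : ContDiff ℝ ∞ qt :=
    (χb.contDiff.mul (hqs.sub contDiff_const)).add contDiff_const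
  have hqtne : ∀ u, qt u ≠ 0 := by
    intro u
    rcases lt_or_ge (|u|) δ with h | h
    · have h1 : |qt u - q 0| < |q 0| := by
        have e : qt u - q 0 = χb u * (q u - q 0) := by rw [hqt]; ring
        rw [e, abs_mul, abs_of_nonneg χb.nonneg]
        calc χb u * |q u - q 0| ≤ 1 * |q u - q 0| := by
              apply mul_le_mul_of_nonneg_right χb.le_one (abs_nonneg _)
          _ < |q 0| := by
              rw [one_mul]; exact (hδ u h).trans (half_lt_self (abs_pos.mpr hq0ne))
      intro h0
      rw [h0, zero_sub, abs_neg] at h1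
      exact lt_irrefl _ h1
    · have h0 : χb u = 0 := by
        apply χb.zero_of_le_dist
        simpa [Real.dist_eq, hχ] using h
      rw [hqt]; simpa [h0] using hq0ne
  have hqteq : ∀ u, |u| < δ/2 → qt u = q u := fun u hu => by
    have h1 : χb u = 1 := by
      apply χb.one_of_mem_closedBall
      simpa [Metric.mem_closedBall, Real.dist_eq, hχ] using hu.le
    rw [hqt]; simp [h1]
  set p : ℝ → ℝ := fun u => (qt u ^ 2) ^ ((1:ℝ)/6) with hp
  have hps : ContDiff ℝ ∞ p := by
    rw [contDiff_iff_contDiffAt]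
    intro u
    exact (Real.contDiffAt_rpow_const_of_ne (pow_ne_zero 2 (hqtne u))).comp u
      (hqts.contDiffAt.pow 2)
  have hpabs : ∀ u, p u = |qt u| ^ ((1:ℝ)/3) := fun u => by
    show (qt u ^ 2) ^ ((1:ℝ)/6) = _
    rw [← sq_abs, ← Real.rpow_natCast |qt u| 2, ← Real.rpow_mul (abs_nonneg _)]
    norm_num
  have hppos : ∀ u, 0 < p u := fun u => by
    rw [hpabs]; exact Real.rpow_pos_of_pos (abs_pos.mpr (hqtne u)) _
  set w23 : ℝ → ℝ := fun v => v ^ ((2:ℝ)/3) with hw23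
  have hw23c : Continuous w23 := by
    rw [continuous_iff_continuousAt]
    intro v
    exact Real.continuousAt_rpow_const v _ (Or.inr (by norm_num))
  set R : ℝ → ℝ := J w23 p with hRdef
  have hRs : ContDiff ℝ ∞ R := contDiff_J_top _ _ hw23c hps
  have hR0 : R 0 = 3/5 * p 0 := by
    rw [hRdef, J_val_zero]
    rw [intervalIntegral.integral_mul_const, hw23]
    rw [integral_rpow (r := (2:ℝ)/3) (Or.inl (by norm_num))]
    rw [Real.one_rpow, Real.zero_rpow (by norm_num : (2:ℝ)/3 + 1 ≠ 0)]
    ring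
  have hR0pos : 0 < R 0 := by rw [hR0]; exact mul_pos (by norm_num) (hppos 0)
  obtain ⟨ε₁, hε₁pos, hε₁⟩ : ∃ ε₁ > 0, ∀ t : ℝ, |t| < ε₁ → 0 < R t := by
    obtain ⟨ε₁, hpos, h⟩ := Metric.continuousAt_iff.mp (hRs.continuous.continuousAt (x := 0))
      (R 0) hR0pos
    refine ⟨ε₁, hpos, fun t ht => ?_⟩
    have h2 := h (x := t) (by simpa [Real.dist_eq] using ht)
    rw [Real.dist_eq] at h2
    have h3 := abs_lt.mp h2
    linarith [h3.1]
  set ε := min ε₁ (δ/2) with hεdef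
  have hεpos : 0 < ε := lt_min hε₁pos (by positivity)
  have habs_of_mem : ∀ t ∈ Set.Ioo (-ε) ε, |t| < ε := fun t ht => abs_lt.mpr ⟨ht.1, ht.2⟩
  have hsA : ∀ t ∈ Set.Ioo (-ε) ε, sA γ t = t * (|t| ^ ((2:ℝ)/3) * R t) := by
    intro t ht
    have htabs : |t| < δ/2 := (habs_of_mem t ht).trans_le (min_le_right _ _)
    have hint : Set.EqOn (fun u => |D u| ^ ((1:ℝ)/3))
        (fun u => |u| ^ ((2:ℝ)/3) * p u) (Set.uIcc 0 t) := by
      intro u hu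
      have huabs : |u| < δ/2 := by
        rcases Set.mem_uIcc.mp hu with ⟨h1, h2⟩ | ⟨h1, h2⟩
        · rw [abs_of_nonneg h1]; exact lt_of_le_of_lt (h2.trans (le_abs_self t)) htabs
        · rw [abs_of_nonpos h2]
          exact lt_of_le_of_lt ((neg_le_neg h1).trans (neg_le_abs t)) htabs
      show |D u| ^ ((1:ℝ)/3) = |u| ^ ((2:ℝ)/3) * p u
      rw [hfacD u, hpabs u, hqteq u huabs]
      rw [abs_mul, Real.mul_rpow (abs_nonneg _) (abs_nonneg _)]
      congr 1
      rw [abs_pow, ← Real.rpow_natCast |u| 2, ← Real.rpow_mul (abs_nonneg u)]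
      norm_num
    have e1 : sA γ t = ∫ u in (0:ℝ)..t, |u| ^ ((2:ℝ)/3) * p u := by
      rw [sA]
      exact intervalIntegral.integral_congr hint
    rcases eq_or_ne t 0 with rfl | htne
    · rw [e1]; simp
    · rw [e1]
      have e2 : Set.EqOn (fun s => |t * s| ^ ((2:ℝ)/3) * p (t * s))
          (fun s => |t| ^ ((2:ℝ)/3) * (w23 s * p (t * s))) (Set.uIcc (0:ℝ) 1) := by
        intro s hs
        have hs0 : 0 ≤ s := by
          rcases Set.mem_uIcc.mp hs with ⟨h1, _⟩ | ⟨_, h2⟩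
          · exact h1
          · linarith
        show |t * s| ^ ((2:ℝ)/3) * p (t * s) = |t| ^ ((2:ℝ)/3) * (w23 s * p (t * s))
        rw [abs_mul, Real.mul_rpow (abs_nonneg _) (abs_nonneg _), abs_of_nonneg hs0, hw23]
        ring
      have e3 := intervalIntegral.integral_comp_mul_left (a := (0:ℝ)) (b := 1)
        (f := fun u => |u| ^ ((2:ℝ)/3) * p u) (c := t) htne
      rw [mul_zero, mul_one] at e3
      have e4 : (∫ s in (0:ℝ)..1, |t * s| ^ ((2:ℝ)/3) * p (t * s))
          = |t| ^ ((2:ℝ)/3) * R t := by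
        rw [intervalIntegral.integral_congr e2, intervalIntegral.integral_const_mul]
        rfl
      have e5 : (∫ u in (0:ℝ)..t, |u| ^ ((2:ℝ)/3) * p u) = t * (|t| ^ ((2:ℝ)/3) * R t) := by
        rw [← e4, e3, smul_eq_mul]
        field_simp
      rw [e5]
  refine ⟨ε, hεpos, fun t => t * (R t) ^ ((3:ℝ)/5), ?_, ?_, by simp, ?_⟩
  · intro t ht
    have hRt : R t ≠ 0 :=
      (hε₁ t ((habs_of_mem t ht).trans_le (min_le_left _ _))).ne'
    exact ((contDiffAt_id.mul
      ((Real.contDiffAt_rpow_const_of_ne hRt).comp t hRs.contDiffAt))).contDiffWithinAt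
  · intro t ht
    rw [hsA t ht]
    rcases eq_or_ne t 0 with rfl | htne
    · simp
    · have htpos : 0 < |t| := abs_pos.mpr htne
      have hRt : 0 < R t := hε₁ t ((habs_of_mem t ht).trans_le (min_le_left _ _))
      have h1 : |t * (|t| ^ ((2:ℝ)/3) * R t)| = |t| ^ ((5:ℝ)/3) * R t := by
        rw [abs_mul, abs_of_nonneg (mul_nonneg (Real.rpow_nonneg (abs_nonneg t) _) hRt.le),
          ← mul_assoc]
        congr 1
        nth_rewrite 1 [← Real.rpow_one |t|]
        rw [← Real.rpow_add htpos]
        norm_num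
      rw [h1, Real.mul_rpow (Real.rpow_nonneg (abs_nonneg t) _) hRt.le,
        ← Real.rpow_mul (abs_nonneg t)]
      norm_num
      rw [← mul_assoc, sign_mul_abs']
  · have hF : HasDerivAt (fun t : ℝ => R t ^ ((3:ℝ)/5))
        (deriv (fun t : ℝ => R t ^ ((3:ℝ)/5)) 0) 0 := by
      have h : ContDiffAt ℝ ∞ (fun t : ℝ => R t ^ ((3:ℝ)/5)) 0 :=
        (Real.contDiffAt_rpow_const_of_ne hR0pos.ne').comp 0 hRs.contDiffAt
      exact (h.differentiableAt (by simp)).hasDerivAt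
    have h2 := (hasDerivAt_id (0:ℝ)).mul hF
    have h4 : HasDerivAt (fun t : ℝ => t * R t ^ ((3:ℝ)/5))
        (1 * R 0 ^ ((3:ℝ)/5) + 0 * deriv (fun t : ℝ => R t ^ ((3:ℝ)/5)) 0) 0 := h2
    have h3 : deriv (fun t : ℝ => t * R t ^ ((3:ℝ)/5)) 0 = R 0 ^ ((3:ℝ)/5) := by
      rw [h4.deriv]; ring
    rw [h3]
    exact Real.rpow_pos_of_pos hR0pos _
end
end
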